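/- For the complete bipartite 2-complex K²_{m,m}, the up-Laplacian L↑_1 written by blocks according to inner edges X₁^in and crossing edges X₁^out is [[m·I, −M],[−Mᵀ, 2m·I − N]] with MᵀM = m·N − 2J, and N has exactly two nonzero eigenvalues: 2m with multiplicity 1 (eigenvector all-ones) and m with multiplicity 2(m−1). -/

import Mathlib

open Finset Matrix

/-- The oriented incidence number `[F:K]` induced by the global linear order on
the vertices: it is `(-1)^j` if `K ⊆ F`, `F ∖ K = {x_j}` and `x_j` is the `j`-th
smallest element of `F`, and `0` otherwise. -/
def inc {V : Type} [DecidableEq V] [LinearOrder V] (F K : Finset V) : ℝ :=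
  if K ⊆ F ∧ F.card = K.card + 1 then
    ∑ x ∈ F \ K, (-1 : ℝ) ^ (K.filter (fun y => y < x)).card
  else 0

/-- An abstract simplicial complex on a vertex type `V`: a family of finite subsets
of `V` closed under taking subsets. -/
structure SC (V : Type) [DecidableEq V] where
  faces : Finset (Finset V)
  down_closed : ∀ ⦃F⦄, F ∈ faces → ∀ ⦃K : Finset V⦄, K ⊆ F → K ∈ faces

variable {V : Type} [Fintype V] [DecidableEq V] [LinearOrder V]

/-- The faces of cardinality `m` (i.e. of dimension `m-1`) of a complex. -/
def SC.dfaces (X : SC V) (m : ℕ) : Finset (Finset V) := X.faces.filter fun F => F.card = m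

/-- The faces of cardinality `m`, as a type (index set of the space `C^{m-1}` of
`(m-1)`-dimensional cochains). -/
abbrev Face (X : SC V) (m : ℕ) := {F : Finset V // F ∈ X.dfaces m}

/-- The matrix of the coboundary map `δ_{m-1}` from `(m-1)`-dimensional cochains
(functions on cardinality-`m` faces) to `m`-dimensional cochains, in the bases of
elementary cochains. -/
def deltaMat (X : SC V) (m : ℕ) : Matrix (Face X (m + 1)) (Face X m) ℝ :=
  fun H F => inc H.1 F.1

/-- The up-Laplacian `L↑_{m-1} = ∂_m δ_{m-1}` acting on `(m-1)`-dimensional cochains,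
where `∂ = δ*` is the adjoint (transpose) of the coboundary map. -/
def Lup (X : SC V) (m : ℕ) : Matrix (Face X m) (Face X m) ℝ :=
  (deltaMat X m)ᵀ * deltaMat X m

/-- The down-Laplacian `L↓_m = δ_{m-1} ∂_m` acting on `m`-dimensional cochains. -/
def Ldown (X : SC V) (m : ℕ) : Matrix (Face X (m + 1)) (Face X (m + 1)) ℝ :=
  deltaMat X m * (deltaMat X m)ᵀ

/-- The space of harmonicSp `i`-cochains `H_i = Z_i ∩ Z^i = ker ∂_i ∩ ker δ_i`. -/
def harmonicSp (X : SC V) (i : ℕ) : Submodule ℝ (Face X (i + 1) → ℝ) :=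
  LinearMap.ker (Matrix.mulVecLin (deltaMat X i)ᵀ) ⊓
    LinearMap.ker (Matrix.mulVecLin (deltaMat X (i + 1)))

/-- The type of all `k`-element subsets of `V`. -/
abbrev KSet (V : Type) [Fintype V] [DecidableEq V] (k : ℕ) := {F : Finset V // F.card = k}

/-- `ε_{F,F'} = [F : F ∩ F'] ⬝ [F' : F ∩ F']`. -/
def eps {V : Type} [DecidableEq V] [LinearOrder V] (F F' : Finset V) : ℝ :=
  inc F (F ∩ F') * inc F' (F ∩ F')

/-- The down-Laplacian `L↓_{k-1}` of the complete complex `K_n^k`, as a matrix indexed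
by all `k`-subsets of the vertex set: diagonal entries `k`, off-diagonal entries
`ε_{F,F'}` (which vanish unless `|F ∩ F'| = k-1`). -/
def Lc (V : Type) [Fintype V] [DecidableEq V] [LinearOrder V] (k : ℕ) :
    Matrix (KSet V k) (KSet V k) ℝ :=
  fun F F' => if F = F' then (k : ℝ) else eps F.1 F'.1

/-- `S` is an independent set of the pure `k`-dimensional complex `X`: it contains
no `k`-dimensional face of `X`. -/
def SC.IsIndep (X : SC V) (k : ℕ) (S : Finset V) : Prop :=
  ∀ H ∈ X.dfaces (k + 1), ¬ H ⊆ S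

/-- The independence number `α(X)` of a pure `k`-dimensional complex. -/
noncomputable def alphaNum (X : SC V) (k : ℕ) : ℕ :=
  sSup {m | ∃ S : Finset V, X.IsIndep k S ∧ S.card = m}

/-- `X` is a pure `k`-dimensional simplicial complex: all faces have dimension at
most `k` and every face is contained in a face of dimension `k`. -/
def SC.Pure (X : SC V) (k : ℕ) : Prop :=
  (∀ F ∈ X.faces, F.card ≤ k + 1) ∧ ∀ F ∈ X.faces, ∃ H ∈ X.dfaces (k + 1), F ⊆ H

/-- Feasibility for the primal semidefinite program defining `ϑ_k(X)`. -/
def thetaFeasible (X : SC V) (k : ℕ) (Y : Matrix (KSet V k) (KSet V k) ℝ) : Prop :=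
  Y.PosSemidef ∧ Matrix.trace Y = 1 ∧
  (∀ F F' : KSet V k, F.1 ∪ F'.1 ∈ X.dfaces (k + 1) → Y F F' = 0) ∧
  (∀ F F' : KSet V k, k + 2 ≤ (F.1 ∪ F'.1).card → Y F F' = 0) ∧
  (∀ F F' G G' : KSet V k, F.1 ∪ F'.1 = G.1 ∪ G'.1 →
    eps F.1 F'.1 * Y F F' = eps G.1 G'.1 * Y G G')

/-- The theta number `ϑ_k(X)` of a pure `k`-dimensional simplicial complex: the optimal
value of the semidefinite program maximizing `⟨L↓_{k-1}, Y⟩` over feasible `Y`. -/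
noncomputable def theta (X : SC V) (k : ℕ) : ℝ :=
  sSup {t | ∃ Y, thetaFeasible X k Y ∧ Matrix.trace (Lc V k * Y) = t}

/-- The complete `k`-dimensional complex on the vertex type `V`: all subsets of
cardinality at most `k+1` are faces. -/
def completeComplex (V : Type) [Fintype V] [DecidableEq V] (k : ℕ) : SC V :=
  ⟨univ.filter fun F => F.card ≤ k + 1, by
    intro F hF K hK
    simp only [mem_filter, mem_univ, true_and] at hF ⊢
    exact le_trans (card_le_card hK) hF⟩

/-- The empty complex (no faces at all), conventionally pure of any dimension. -/
def emptyComplex (V : Type) [DecidableEq V] : SC V :=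
  ⟨∅, by intro F hF; simp at hF⟩

/-- The largest eigenvalue of a matrix. -/
noncomputable def lambdaMax {ι : Type} [Fintype ι] (M : Matrix ι ι ℝ) : ℝ :=
  sSup {μ : ℝ | Module.End.HasEigenvalue (Matrix.mulVecLin M) μ}

/-- The smallest eigenvalue of a matrix. -/
noncomputable def lambdaMin {ι : Type} [Fintype ι] (M : Matrix ι ι ℝ) : ℝ :=
  sInf {μ : ℝ | Module.End.HasEigenvalue (Matrix.mulVecLin M) μ}

/-- The degree of a face `F`: the number of faces of one higher dimension containing it. -/
def SC.deg (X : SC V) (F : Finset V) : ℕ :=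
  ((X.dfaces (F.card + 1)).filter fun H => F ⊆ H).card

/-- The minimal degree of a `(k-1)`-dimensional face (a face of cardinality `k`). -/
noncomputable def degMin (X : SC V) (k : ℕ) : ℕ :=
  sInf {m | ∃ F ∈ X.dfaces k, m = X.deg F}

/-- The up-Laplacian `L↑_{k-1}(X)` extended by zeros to a matrix indexed by all
`k`-subsets of the vertex set. -/
def LupE (X : SC V) (k : ℕ) : Matrix (KSet V k) (KSet V k) ℝ :=
  fun F F' => ∑ H ∈ X.dfaces (k + 1), inc H F.1 * inc H F'.1

/-- The down-Laplacian `L↓_{k-1}(X)` extended by zeros to a matrix indexed by all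
`k`-subsets of the vertex set. -/
def LdownE (X : SC V) (k : ℕ) : Matrix (KSet V k) (KSet V k) ℝ :=
  fun F F' =>
    if F.1 ∈ X.faces ∧ F'.1 ∈ X.faces then ∑ K ∈ X.dfaces (k - 1), inc F.1 K * inc F'.1 K
    else 0

/-- The Lovász theta number of a graph given by an adjacency relation `adj` on a finite
vertex type, in its primal formulation. -/
noncomputable def thetaG {W : Type} [Fintype W] (adj : W → W → Prop) : ℝ :=
  sSup {t | ∃ Z : Matrix W W ℝ, Z.PosSemidef ∧ Matrix.trace Z = 1 ∧
    (∀ v w, adj v w → Z v w = 0) ∧ t = ∑ v, ∑ w, Z v w}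

/-- The complete bipartite 2-complex `K²_{m,m}` on `2m` vertices: the two parts are the
fibers of `v ↦ v / m`, the 2-faces are all triangles meeting both parts, and the
1-skeleton is complete. -/
def bipartite2 (m : ℕ) : SC (Fin (2 * m)) :=
  ⟨univ.filter fun F =>
      F.card ≤ 2 ∨ (F.card = 3 ∧ ∃ v ∈ F, ∃ w ∈ F, v.val / m ≠ w.val / m), by
    intro F hF K hK
    simp only [mem_filter, mem_univ, true_and] at hF ⊢
    by_cases hc : K.card ≤ 2
    · exact Or.inl hc
    · have hF3 : F.card ≤ 3 := by
        rcases hF with h | h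
        · exact le_trans h (by norm_num)
        · exact le_of_eq h.1
      have hKF : K = F := Finset.eq_of_subset_of_card_le hK (by omega)
      rw [hKF]; exact hF⟩

section IncBasic
variable {V : Type} [DecidableEq V] [LinearOrder V]

lemma inc_of_not {F K : Finset V} (h : ¬ (K ⊆ F ∧ F.card = K.card + 1)) : inc F K = 0 :=
  if_neg h

lemma inc_zero_of_not_subset {F K : Finset V} (h : ¬ K ⊆ F) : inc F K = 0 :=
  inc_of_not (fun hc => h hc.1)

lemma exists_sdiff_singleton {F K : Finset V} (hs : K ⊆ F) (hc : F.card = K.card + 1) :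
    ∃ x, F \ K = {x} := by
  have hcard : (F \ K).card = 1 := by rw [Finset.card_sdiff_of_subset hs]; omega
  exact Finset.card_eq_one.mp hcard

lemma inc_eq_pow {F K : Finset V} {x : V} (hs : K ⊆ F) (hc : F.card = K.card + 1)
    (hx : F \ K = {x}) :
    inc F K = (-1 : ℝ) ^ (K.filter (fun y => y < x)).card := by
  rw [inc, if_pos ⟨hs, hc⟩, hx, Finset.sum_singleton]

lemma inc_mul_self {F K : Finset V} (hs : K ⊆ F) (hc : F.card = K.card + 1) :
    inc F K * inc F K = 1 := by
  obtain ⟨x, hx⟩ := exists_sdiff_singleton hs hc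
  rw [inc_eq_pow hs hc hx, ← pow_add]
  exact (neg_one_pow_eq_one_iff_even (by norm_num)).mpr (by simp [Nat.even_add])

lemma card_pair_of_ne {a b : V} (h : a ≠ b) : ({a, b} : Finset V).card = 2 := by
  rw [Finset.card_insert_of_notMem (by simp [h]), Finset.card_singleton]

lemma card_triple {a b c : V} (hab : a ≠ b) (hac : a ≠ c) (hbc : b ≠ c) :
    ({a, b, c} : Finset V).card = 3 := by
  rw [Finset.card_insert_of_notMem (by simp [hab, hac]), card_pair_of_ne hbc]

lemma inc_pair_min {a b : V} (h : a < b) : inc {a, b} ({a} : Finset V) = -1 := by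
  have hne : a ≠ b := h.ne
  have h1 : ({a, b} : Finset V) \ {a} = {b} := by
    ext x; simp only [Finset.mem_sdiff, Finset.mem_insert, Finset.mem_singleton]
    constructor
    · rintro ⟨h2 | h2, h3⟩ <;> tauto
    · rintro rfl; exact ⟨Or.inr rfl, fun h2 => hne h2.symm⟩
  rw [inc_eq_pow (by simp) (by simp [card_pair_of_ne hne]) h1]
  have : ({a} : Finset V).filter (fun y => y < b) = {a} := by
    simp [Finset.filter_singleton, h]
  rw [this]; simp

lemma inc_pair_max {a b : V} (h : a < b) : inc {a, b} ({b} : Finset V) = 1 := by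
  have hne : a ≠ b := h.ne
  have h1 : ({a, b} : Finset V) \ {b} = {a} := by
    ext x; simp only [Finset.mem_sdiff, Finset.mem_insert, Finset.mem_singleton]
    constructor
    · rintro ⟨h2 | h2, h3⟩ <;> tauto
    · rintro rfl; exact ⟨Or.inl rfl, fun h2 => hne h2⟩
  rw [inc_eq_pow (by simp) (by simp [card_pair_of_ne hne]) h1]
  have : ({b} : Finset V).filter (fun y => y < a) = ∅ := by
    simp [Finset.filter_singleton, not_lt.mpr h.le]
  rw [this]; simp

lemma tri_sdiff_1 {a b c : V} (hab : a ≠ b) (hac : a ≠ c) (hbc : b ≠ c) :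
    ({a, b, c} : Finset V) \ {a, b} = {c} := by
  ext x; simp only [Finset.mem_sdiff, Finset.mem_insert, Finset.mem_singleton]
  constructor
  · rintro ⟨h2 | h2 | h2, h3⟩ <;> tauto
  · rintro rfl; exact ⟨by tauto, by push_neg; exact ⟨fun h => hac h.symm, fun h => hbc h.symm⟩⟩

lemma tri_sdiff_2 {a b c : V} (hab : a ≠ b) (hac : a ≠ c) (hbc : b ≠ c) :
    ({a, b, c} : Finset V) \ {a, c} = {b} := by
  ext x; simp only [Finset.mem_sdiff, Finset.mem_insert, Finset.mem_singleton]
  constructor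
  · rintro ⟨h2 | h2 | h2, h3⟩ <;> tauto
  · rintro rfl; exact ⟨by tauto, by push_neg; exact ⟨fun h => hab h.symm, hbc⟩⟩

lemma tri_sdiff_3 {a b c : V} (hab : a ≠ b) (hac : a ≠ c) (hbc : b ≠ c) :
    ({a, b, c} : Finset V) \ {b, c} = {a} := by
  ext x; simp only [Finset.mem_sdiff, Finset.mem_insert, Finset.mem_singleton]
  constructor
  · rintro ⟨h2 | h2 | h2, h3⟩ <;> tauto
  · rintro rfl; exact ⟨by tauto, by push_neg; exact ⟨hab, hac⟩⟩

lemma inc_tri_ab {a b c : V} (hab : a < b) (hbc : b < c) :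
    inc {a, b, c} ({a, b} : Finset V) = 1 := by
  have hac := hab.trans hbc
  rw [inc_eq_pow (by intro x; simp; tauto)
    (by rw [card_triple hab.ne hac.ne hbc.ne, card_pair_of_ne hab.ne])
    (tri_sdiff_1 hab.ne hac.ne hbc.ne)]
  have : ({a, b} : Finset V).filter (fun y => y < c) = {a, b} := by
    rw [Finset.filter_eq_self]; intro x hx
    simp at hx; rcases hx with rfl | rfl; exacts [hac, hbc]
  rw [this, card_pair_of_ne hab.ne]; norm_num

lemma inc_tri_ac {a b c : V} (hab : a < b) (hbc : b < c) :
    inc {a, b, c} ({a, c} : Finset V) = -1 := by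
  have hac := hab.trans hbc
  rw [inc_eq_pow (by intro x; simp; tauto)
    (by rw [card_triple hab.ne hac.ne hbc.ne, card_pair_of_ne hac.ne])
    (tri_sdiff_2 hab.ne hac.ne hbc.ne)]
  have : ({a, c} : Finset V).filter (fun y => y < b) = {a} := by
    ext x; simp only [Finset.mem_filter, Finset.mem_insert, Finset.mem_singleton]
    constructor
    · rintro ⟨rfl | rfl, h⟩; exact rfl; exact absurd h (not_lt.mpr hbc.le)
    · rintro rfl; exact ⟨Or.inl rfl, hab⟩
  rw [this]; simp

lemma inc_tri_bc {a b c : V} (hab : a < b) (hbc : b < c) :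
    inc {a, b, c} ({b, c} : Finset V) = 1 := by
  have hac := hab.trans hbc
  rw [inc_eq_pow (by intro x; simp; tauto)
    (by rw [card_triple hab.ne hac.ne hbc.ne, card_pair_of_ne hbc.ne])
    (tri_sdiff_3 hab.ne hac.ne hbc.ne)]
  have : ({b, c} : Finset V).filter (fun y => y < a) = ∅ := by
    rw [Finset.filter_eq_empty_iff]; intro x hx
    simp at hx; rcases hx with rfl | rfl
    exacts [not_lt.mpr hab.le, not_lt.mpr hac.le]
  rw [this]; simp

end IncBasic
section SignLemma
variable {V : Type} [DecidableEq V] [LinearOrder V]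

lemma exists_sorted_three {H : Finset V} (h : H.card = 3) :
    ∃ a b c, a < b ∧ b < c ∧ H = {a, b, c} := by
  obtain ⟨a, b, c, hab, hac, hbc, rfl⟩ := Finset.card_eq_three.mp h
  have perm : ∀ x y z : V, ({x, y, z} : Finset V) = {x, z, y} := by
    intro x y z; ext w; simp; tauto
  have perm2 : ∀ x y z : V, ({x, y, z} : Finset V) = {y, x, z} := by
    intro x y z; ext w; simp; tauto
  rcases hab.lt_or_gt with h1 | h1 <;> rcases hac.lt_or_gt with h2 | h2 <;>
    rcases hbc.lt_or_gt with h3 | h3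
  · exact ⟨a, b, c, h1, h3, rfl⟩
  · exact ⟨a, c, b, h2, h3, by ext w; simp; tauto⟩
  · exact absurd ((h2.trans h1).trans h3) (lt_irrefl c)
  · exact ⟨c, a, b, h2, h1, by ext w; simp; tauto⟩
  · exact ⟨b, a, c, h1, h2, by ext w; simp; tauto⟩
  · exact absurd ((h2.trans h3).trans h1) (lt_irrefl a)
  · exact ⟨b, c, a, h3, h2, by ext w; simp; tauto⟩
  · exact ⟨c, b, a, h3, h1, by ext w; simp; tauto⟩

lemma pair_subsets_of_three {a b c : V} (hab : a ≠ b) (hac : a ≠ c) (hbc : b ≠ c)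
    {F : Finset V} (hF : F ⊆ ({a, b, c} : Finset V)) (hc2 : F.card = 2) :
    F = {a, b} ∨ F = {a, c} ∨ F = {b, c} := by
  obtain ⟨x, y, hxy, rfl⟩ := Finset.card_eq_two.mp hc2
  have hx : x ∈ ({a, b, c} : Finset V) := hF (by simp)
  have hy : y ∈ ({a, b, c} : Finset V) := hF (by simp)
  have pc : ∀ u v : V, ({u, v} : Finset V) = {v, u} := fun u v => Finset.pair_comm u v
  simp only [Finset.mem_insert, Finset.mem_singleton] at hx hy
  rcases hx with rfl | rfl | rfl <;> rcases hy with rfl | rfl | rfl <;>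
    first
      | exact absurd rfl hxy
      | tauto
      | (rw [pc]; tauto)

/-- The key sign identity: for distinct 2-subsets `F, F'` of a 3-set `H` with
`F ∩ F' = {v}`, one has `[H:F][H:F'] = -[F:{v}][F':{v}]`. -/
lemma inc_sign_identity {H F F' : Finset V} {v : V}
    (hH : H.card = 3) (hF : F ⊆ H) (hF' : F' ⊆ H)
    (h2 : F.card = 2) (h2' : F'.card = 2) (hne : F ≠ F') (hv : F ∩ F' = {v}) :
    inc H F * inc H F' = -(inc F {v} * inc F' {v}) := by
  obtain ⟨a, b, c, hab, hbc, rfl⟩ := exists_sorted_three hH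
  have hac := hab.trans hbc
  have h1 := pair_subsets_of_three hab.ne hac.ne hbc.ne hF h2
  have h1' := pair_subsets_of_three hab.ne hac.ne hbc.ne hF' h2'
  have iab : ({a,b} : Finset V) ∩ {a,c} = {a} := by
    ext x
    simp only [Finset.mem_inter, Finset.mem_insert, Finset.mem_singleton]
    constructor
    · rintro ⟨rfl | rfl, h2 | h2⟩ <;>
        first
        | rfl
        | exact h2
        | exact absurd h2 hab.ne
        | exact absurd h2 hbc.ne
        | exact absurd h2 hac.ne
    · rintro rfl; exact ⟨Or.inl rfl, Or.inl rfl⟩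
  have ibc : ({a,b} : Finset V) ∩ {b,c} = {b} := by
    ext x
    simp only [Finset.mem_inter, Finset.mem_insert, Finset.mem_singleton]
    constructor
    · rintro ⟨rfl | rfl, h2 | h2⟩ <;>
        first
        | rfl
        | exact h2
        | exact absurd h2 hab.ne
        | exact absurd h2 hbc.ne
        | exact absurd h2 hac.ne
    · rintro rfl; exact ⟨Or.inr rfl, Or.inl rfl⟩
  have icc : ({a,c} : Finset V) ∩ {b,c} = {c} := by
    ext x
    simp only [Finset.mem_inter, Finset.mem_insert, Finset.mem_singleton]
    constructor
    · rintro ⟨rfl | rfl, h2 | h2⟩ <;>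
        first
        | rfl
        | exact h2
        | exact absurd h2 hab.ne
        | exact absurd h2 hbc.ne
        | exact absurd h2 hac.ne
    · rintro rfl; exact ⟨Or.inr rfl, Or.inr rfl⟩
  rcases h1 with rfl | rfl | rfl <;> rcases h1' with rfl | rfl | rfl
  · exact absurd rfl hne
  · obtain rfl : a = v := Finset.singleton_injective (iab.symm.trans hv)
    rw [inc_tri_ab hab hbc, inc_tri_ac hab hbc, inc_pair_min hab, inc_pair_min hac]; ring
  · obtain rfl : b = v := Finset.singleton_injective (ibc.symm.trans hv)
    rw [inc_tri_ab hab hbc, inc_tri_bc hab hbc, inc_pair_max hab, inc_pair_min hbc]; ring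
  · obtain rfl : a = v := by
      rw [Finset.inter_comm] at hv
      exact Finset.singleton_injective (iab.symm.trans hv)
    rw [inc_tri_ab hab hbc, inc_tri_ac hab hbc, inc_pair_min hab, inc_pair_min hac]; ring
  · exact absurd rfl hne
  · obtain rfl : c = v := Finset.singleton_injective (icc.symm.trans hv)
    rw [inc_tri_ac hab hbc, inc_tri_bc hab hbc, inc_pair_max hac, inc_pair_max hbc]; ring
  · obtain rfl : b = v := by
      rw [Finset.inter_comm] at hv
      exact Finset.singleton_injective (ibc.symm.trans hv)
    rw [inc_tri_ab hab hbc, inc_tri_bc hab hbc, inc_pair_max hab, inc_pair_min hbc]; ring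
  · obtain rfl : c = v := by
      rw [Finset.inter_comm] at hv
      exact Finset.singleton_injective (icc.symm.trans hv)
    rw [inc_tri_ac hab hbc, inc_tri_bc hab hbc, inc_pair_max hac, inc_pair_max hbc]; ring
  · exact absurd rfl hne

end SignLemma
section Bip
variable {m : ℕ}

abbrev OutT (m : ℕ) :=
  {F : KSet (Fin (2 * m)) 2 // ¬ ∀ v ∈ F.1, ∀ w ∈ F.1, v.val / m = w.val / m}
abbrev InT (m : ℕ) :=
  {F : KSet (Fin (2 * m)) 2 // ∀ v ∈ F.1, ∀ w ∈ F.1, v.val / m = w.val / m}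

lemma part_cases (hm : 1 ≤ m) (v : Fin (2 * m)) :
    (v.val / m = 0 ∧ v.val < m) ∨ (v.val / m = 1 ∧ m ≤ v.val) := by
  have h2 := v.isLt
  rcases Nat.lt_or_ge v.val m with h | h
  · exact Or.inl ⟨Nat.div_eq_of_lt h, h⟩
  · right
    refine ⟨?_, h⟩
    have h1 : 1 ≤ v.val / m := (Nat.one_le_div_iff (by omega)).mpr h
    have h3 : v.val / m < 2 := Nat.div_lt_of_lt_mul (by omega)
    omega

lemma part_ne_iff (hm : 1 ≤ m) (v w : Fin (2 * m)) :
    v.val / m ≠ w.val / m ↔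
      (v.val < m ∧ m ≤ w.val) ∨ (w.val < m ∧ m ≤ v.val) := by
  rcases part_cases hm v with ⟨h1, h2⟩ | ⟨h1, h2⟩ <;>
    rcases part_cases hm w with ⟨h3, h4⟩ | ⟨h3, h4⟩ <;> rw [h1, h3] <;> omega

lemma card_filter_lt : ((Finset.univ : Finset (Fin (2 * m))).filter
    fun v => v.val < m).card = m := by
  have := Finset.card_bij (s := (Finset.univ : Finset (Fin m)))
    (t := (Finset.univ : Finset (Fin (2 * m))).filter fun v => v.val < m)
    (i := fun i _ => ⟨i.val, by have := i.isLt; omega⟩)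
    (fun i _ => Finset.mem_filter.mpr ⟨Finset.mem_univ _, i.isLt⟩)
    (fun x _ y _ h => by
      simp only [Fin.mk.injEq] at h
      exact Fin.ext h)
    (fun v hv => ⟨⟨v.val, (Finset.mem_filter.mp hv).2⟩, Finset.mem_univ _, Fin.ext rfl⟩)
  simpa using this.symm

lemma card_filter_ge : ((Finset.univ : Finset (Fin (2 * m))).filter
    fun v => m ≤ v.val).card = m := by
  have := Finset.card_bij (s := (Finset.univ : Finset (Fin m)))
    (t := (Finset.univ : Finset (Fin (2 * m))).filter fun v => m ≤ v.val)
    (i := fun i _ => ⟨m + i.val, by have := i.isLt; omega⟩)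
    (fun i _ => Finset.mem_filter.mpr ⟨Finset.mem_univ _, Nat.le_add_right m i.val⟩)
    (fun x _ y _ h => by
      simp only [Fin.mk.injEq] at h
      exact Fin.ext (by omega))
    (fun v hv => by
      have h := (Finset.mem_filter.mp hv).2
      exact ⟨⟨v.val - m, by have := v.isLt; omega⟩, Finset.mem_univ _,
        Fin.ext (by simp only []; omega)⟩)
  simpa using this.symm

lemma filter_part_ne_of_lt (hm : 1 ≤ m) {v : Fin (2 * m)} (hv : v.val < m) :
    ((Finset.univ : Finset (Fin (2 * m))).filter
      fun x => x.val / m ≠ v.val / m) = Finset.univ.filter fun x => m ≤ x.val := by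
  apply Finset.filter_congr
  intro x _
  rw [part_ne_iff hm x v]
  omega

lemma filter_part_ne_of_ge (hm : 1 ≤ m) {v : Fin (2 * m)} (hv : m ≤ v.val) :
    ((Finset.univ : Finset (Fin (2 * m))).filter
      fun x => x.val / m ≠ v.val / m) = Finset.univ.filter fun x => x.val < m := by
  apply Finset.filter_congr
  intro x _
  rw [part_ne_iff hm x v]
  omega

lemma card_part_ne (hm : 1 ≤ m) (v : Fin (2 * m)) :
    ((Finset.univ : Finset (Fin (2 * m))).filter
      fun x => x.val / m ≠ v.val / m).card = m := by
  rcases part_cases hm v with ⟨h1, h2⟩ | ⟨h1, h2⟩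
  · rw [filter_part_ne_of_lt hm h2, card_filter_ge]
  · rw [filter_part_ne_of_ge hm h2, card_filter_lt]

lemma card_part_eq (hm : 1 ≤ m) (v : Fin (2 * m)) :
    ((Finset.univ : Finset (Fin (2 * m))).filter
      fun x => x.val / m = v.val / m).card = m := by
  rcases part_cases hm v with ⟨h1, h2⟩ | ⟨h1, h2⟩
  · have he : ((Finset.univ : Finset (Fin (2 * m))).filter
        fun x => x.val / m = v.val / m) =
        Finset.univ.filter fun x => x.val < m := by
      apply Finset.filter_congr
      intro x _
      rcases part_cases hm x with ⟨h3, h4⟩ | ⟨h3, h4⟩ <;> rw [h3, h1] <;> omega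
    rw [he, card_filter_lt]
  · have he : ((Finset.univ : Finset (Fin (2 * m))).filter
        fun x => x.val / m = v.val / m) =
        Finset.univ.filter fun x => m ≤ x.val := by
      apply Finset.filter_congr
      intro x _
      rcases part_cases hm x with ⟨h3, h4⟩ | ⟨h3, h4⟩ <;> rw [h3, h1] <;> omega
    rw [he, card_filter_ge]

/-- canonical form of a crossing 2-set -/
lemma cross_form (hm : 1 ≤ m) {G : Finset (Fin (2 * m))} (h2 : G.card = 2)
    (hx : ¬ ∀ v ∈ G, ∀ w ∈ G, v.val / m = w.val / m) :
    ∃ a b, a.val < m ∧ m ≤ b.val ∧ a < b ∧ G = {a, b} := by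
  push_neg at hx
  obtain ⟨v, hv, w, hw, hvw⟩ := hx
  have hne : v ≠ w := fun h => hvw (by rw [h])
  have hG : G = {v, w} := by
    refine (Finset.eq_of_subset_of_card_le ?_ ?_).symm
    · intro x hx; simp at hx; rcases hx with rfl | rfl <;> assumption
    · rw [card_pair_of_ne hne, h2]
  rcases (part_ne_iff hm v w).mp hvw with ⟨ha, hb⟩ | ⟨ha, hb⟩
  · exact ⟨v, w, ha, hb, by rw [Fin.lt_def]; omega, hG⟩
  · exact ⟨w, v, ha, hb, by rw [Fin.lt_def]; omega, by rw [hG, Finset.pair_comm]⟩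

/-- canonical form of an inner 2-set -/
lemma inner_form {G : Finset (Fin (2 * m))} (h2 : G.card = 2)
    (hx : ∀ v ∈ G, ∀ w ∈ G, v.val / m = w.val / m) :
    ∃ a b, a < b ∧ a.val / m = b.val / m ∧ G = {a, b} := by
  obtain ⟨x, y, hxy, rfl⟩ := Finset.card_eq_two.mp h2
  have hp := hx x (by simp) y (by simp)
  rcases hxy.lt_or_gt with h | h
  · exact ⟨x, y, h, hp, rfl⟩
  · exact ⟨y, x, h, hp.symm, Finset.pair_comm x y⟩

lemma mem_dfaces3_iff (m : ℕ) (H : Finset (Fin (2 * m))) :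
    H ∈ (bipartite2 m).dfaces 3 ↔
      H.card = 3 ∧ ∃ v ∈ H, ∃ w ∈ H, v.val / m ≠ w.val / m := by
  simp only [SC.dfaces, bipartite2, Finset.mem_filter, Finset.mem_univ, true_and]
  constructor
  · rintro ⟨h1 | h1, h2⟩
    · omega
    · exact ⟨h2, h1.2⟩
  · rintro ⟨h1, h2⟩; exact ⟨Or.inr ⟨h1, h2⟩, h1⟩

/-- sums over the crossing-edge subtype as sums over a Finset of Finsets -/
lemma sum_out (m : ℕ) (f : Finset (Fin (2 * m)) → ℝ) :
    ∑ G : OutT m, f G.1.1 =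
      ∑ F ∈ (Finset.univ.filter fun F : Finset (Fin (2 * m)) =>
        F.card = 2 ∧ ¬ ∀ v ∈ F, ∀ w ∈ F, v.val / m = w.val / m), f F := by
  apply Finset.sum_bij (i := fun (G : OutT m) (_ : G ∈ Finset.univ) => G.1.1)
  · intro G _
    simp only [Finset.mem_filter, Finset.mem_univ, true_and]
    exact ⟨G.1.2, G.2⟩
  · intro G _ G' _ h
    exact Subtype.ext (Subtype.ext h)
  · intro F hF
    simp only [Finset.mem_filter, Finset.mem_univ, true_and] at hF
    exact ⟨⟨⟨F, hF.1⟩, hF.2⟩, Finset.mem_univ _, rfl⟩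
  · intro G _; rfl

lemma sum_in (m : ℕ) (f : Finset (Fin (2 * m)) → ℝ) :
    ∑ G : InT m, f G.1.1 =
      ∑ F ∈ (Finset.univ.filter fun F : Finset (Fin (2 * m)) =>
        F.card = 2 ∧ ∀ v ∈ F, ∀ w ∈ F, v.val / m = w.val / m), f F := by
  apply Finset.sum_bij (i := fun (G : InT m) (_ : G ∈ Finset.univ) => G.1.1)
  · intro G _
    simp only [Finset.mem_filter, Finset.mem_univ, true_and]
    exact ⟨G.1.2, G.2⟩
  · intro G _ G' _ h
    exact Subtype.ext (Subtype.ext h)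
  · intro F hF
    simp only [Finset.mem_filter, Finset.mem_univ, true_and] at hF
    exact ⟨⟨⟨F, hF.1⟩, hF.2⟩, Finset.mem_univ _, rfl⟩
  · intro G _; rfl

end Bip
section LupEComp

lemma LupE_diag {V : Type} [Fintype V] [DecidableEq V] [LinearOrder V]
    (X : SC V) (F : KSet V 2) :
    LupE X 2 F F = (((X.dfaces 3)).filter (fun H => F.1 ⊆ H)).card := by
  unfold LupE
  rw [← Finset.sum_boole]
  apply Finset.sum_congr rfl
  intro H hH
  have hc : H.card = 3 := (Finset.mem_filter.mp hH).2
  by_cases h : F.1 ⊆ H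
  · rw [if_pos h]
    exact inc_mul_self h (by rw [hc, F.2])
  · rw [if_neg h, inc_zero_of_not_subset h, mul_zero]

lemma LupE_offdiag {V : Type} [Fintype V] [DecidableEq V] [LinearOrder V]
    (X : SC V) (F F' : KSet V 2) (hne : F.1 ≠ F'.1) :
    LupE X 2 F F' = if (F.1 ∪ F'.1) ∈ X.dfaces 3 then
      inc (F.1 ∪ F'.1) F.1 * inc (F.1 ∪ F'.1) F'.1 else 0 := by
  have hss : F.1 ⊂ F.1 ∪ F'.1 := by
    refine ⟨Finset.subset_union_left, fun hsub => ?_⟩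
    have h1 : F'.1 ⊆ F.1 := Finset.subset_union_right.trans hsub
    exact hne (Finset.eq_of_subset_of_card_le h1 (by rw [F.2, F'.2])).symm
  have hu3 : 3 ≤ (F.1 ∪ F'.1).card := by
    have := Finset.card_lt_card hss
    rw [F.2] at this; omega
  have key : ∀ H ∈ X.dfaces 3, H ≠ F.1 ∪ F'.1 → inc H F.1 * inc H F'.1 = 0 := by
    intro H hH hne2
    have hc : H.card = 3 := (Finset.mem_filter.mp hH).2
    by_cases h1 : F.1 ⊆ H
    · by_cases h2 : F'.1 ⊆ H
      · exact absurd (Finset.eq_of_subset_of_card_le (Finset.union_subset h1 h2)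
          (by omega)).symm hne2
      · rw [inc_zero_of_not_subset h2, mul_zero]
    · rw [inc_zero_of_not_subset h1, zero_mul]
  unfold LupE
  split_ifs with h
  · exact Finset.sum_eq_single_of_mem _ h (fun H hH hne3 => key H hH hne3)
  · refine Finset.sum_eq_zero fun H hH => ?_
    by_cases hEq : H = F.1 ∪ F'.1
    · exact absurd (hEq ▸ hH) h
    · exact key H hH hEq

variable {m : ℕ}

lemma count_inner (hm : 1 ≤ m) {a b : Fin (2 * m)} (hab : a < b)
    (hpab : a.val / m = b.val / m) :
    (((bipartite2 m).dfaces 3).filter (fun H => ({a, b} : Finset (Fin (2 * m))) ⊆ H)).card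
      = m := by
  have himg : ((bipartite2 m).dfaces 3).filter
      (fun H => ({a, b} : Finset (Fin (2 * m))) ⊆ H) =
      (Finset.univ.filter fun x : Fin (2 * m) => x.val / m ≠ a.val / m).image
        (fun x => insert x {a, b}) := by
    ext H
    simp only [Finset.mem_filter, Finset.mem_image, Finset.mem_univ, true_and,
      mem_dfaces3_iff]
    constructor
    · rintro ⟨⟨hc3, v, hv, w, hw, hvw⟩, hsub⟩
      obtain ⟨x, hx⟩ := exists_sdiff_singleton hsub (by rw [hc3, card_pair_of_ne hab.ne])
      have hH : H = insert x {a, b} := by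
        rw [Finset.insert_eq, Finset.union_comm, ← hx, Finset.union_sdiff_of_subset hsub]
      have hmemx : ∀ u ∈ H, u = x ∨ u = a ∨ u = b := by
        intro u hu
        rw [hH] at hu
        simpa using hu
      have hxp : x.val / m ≠ a.val / m := by
        rcases hmemx v hv with rfl | rfl | rfl <;> rcases hmemx w hw with rfl | rfl | rfl <;>
          first
          | exact absurd rfl hvw
          | exact absurd hpab hvw
          | exact absurd hpab.symm hvw
          | (intro hc; exact hvw (by omega))
          | (intro hc; exact hvw (by rw [hc]; omega))
      exact ⟨x, hxp, hH.symm⟩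
    · rintro ⟨x, hxp, rfl⟩
      have hxa : x ≠ a := fun h => hxp (by rw [h])
      have hxb : x ≠ b := fun h => hxp (by rw [h, ← hpab])
      refine ⟨⟨?_, x, by simp, a, by simp, hxp⟩, by intro u hu; simp at hu ⊢; tauto⟩
      rw [Finset.card_insert_of_notMem (by simp [hxa, hxb]), card_pair_of_ne hab.ne]
  rw [himg, Finset.card_image_of_injOn, card_part_ne hm a]
  intro x hx y hy hxy
  have hxy' : insert x ({a, b} : Finset (Fin (2 * m))) = insert y {a, b} := hxy
  simp only [Finset.coe_filter, Set.mem_setOf_eq] at hx hy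
  have hxa : x ≠ a := fun h => hx.2 (by rw [h])
  have hxb : x ≠ b := fun h => hx.2 (by rw [h, ← hpab])
  have hmem : x ∈ insert y ({a, b} : Finset (Fin (2 * m))) := by
    rw [← hxy']; simp
  simp only [Finset.mem_insert, Finset.mem_singleton] at hmem
  tauto

lemma count_cross (hm : 1 ≤ m) {a b : Fin (2 * m)} (ha : a.val < m) (hb : m ≤ b.val) :
    (((bipartite2 m).dfaces 3).filter
      (fun H => ({a, b} : Finset (Fin (2 * m))) ⊆ H)).card = 2 * m - 2 := by
  have hab : a < b := by rw [Fin.lt_def]; omega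
  have hpab : a.val / m ≠ b.val / m := (part_ne_iff hm a b).mpr (Or.inl ⟨ha, hb⟩)
  have himg : ((bipartite2 m).dfaces 3).filter
      (fun H => ({a, b} : Finset (Fin (2 * m))) ⊆ H) =
      (Finset.univ.filter fun x : Fin (2 * m) => x ∉ ({a, b} : Finset (Fin (2 * m)))).image
        (fun x => insert x {a, b}) := by
    ext H
    simp only [Finset.mem_filter, Finset.mem_image, Finset.mem_univ, true_and,
      mem_dfaces3_iff]
    constructor
    · rintro ⟨⟨hc3, _⟩, hsub⟩
      obtain ⟨x, hx⟩ := exists_sdiff_singleton hsub (by rw [hc3, card_pair_of_ne hab.ne])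
      have hH : H = insert x {a, b} := by
        rw [Finset.insert_eq, Finset.union_comm, ← hx, Finset.union_sdiff_of_subset hsub]
      have hxm : x ∉ ({a, b} : Finset (Fin (2 * m))) :=
        (Finset.mem_sdiff.mp (hx ▸ Finset.mem_singleton_self x)).2
      exact ⟨x, hxm, hH.symm⟩
    · rintro ⟨x, hxm, rfl⟩
      refine ⟨⟨?_, a, by simp, b, by simp, hpab⟩, by intro u hu; simp at hu ⊢; tauto⟩
      rw [Finset.card_insert_of_notMem hxm, card_pair_of_ne hab.ne]
  rw [himg, Finset.card_image_of_injOn]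
  · rw [Finset.filter_not, Finset.card_sdiff_of_subset (Finset.filter_subset _ _)]
    rw [Finset.filter_univ_mem, Finset.card_univ]
    simp [card_pair_of_ne hab.ne]
  · intro x hx y hy hxy
    have hxy' : insert x ({a, b} : Finset (Fin (2 * m))) = insert y {a, b} := hxy
    simp only [Finset.coe_filter, Set.mem_setOf_eq] at hx hy
    have hmem : x ∈ insert y ({a, b} : Finset (Fin (2 * m))) := by
      rw [← hxy']; simp
    simp only [Finset.mem_insert, Finset.mem_singleton] at hmem
    rcases hmem with rfl | rfl | rfl
    · rfl
    · exact absurd (by simp) hx.2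
    · exact absurd (by simp) hx.2

end LupEComp
section Entries
variable {m : ℕ}

lemma inc_single_sq {G : Finset (Fin (2 * m))} (h2 : G.card = 2) {v : Fin (2 * m)}
    (hv : v ∈ G) : inc G {v} * inc G {v} = 1 :=
  inc_mul_self (Finset.singleton_subset_iff.mpr hv) (by rw [h2]; simp)

lemma inc_single_zero {G : Finset (Fin (2 * m))} {v : Fin (2 * m)} (hv : v ∉ G) :
    inc G {v} = 0 :=
  inc_zero_of_not_subset (by simpa)

lemma inter_card_le_one {F G : Finset (Fin (2 * m))} (hF2 : F.card = 2) (hG2 : G.card = 2)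
    (hne : F ≠ G) : (F ∩ G).card ≤ 1 := by
  by_contra h
  push_neg at h
  have h1 : F ∩ G = F :=
    Finset.eq_of_subset_of_card_le Finset.inter_subset_left (by omega)
  have h2 : F ⊆ G := by rw [← h1]; exact Finset.inter_subset_right
  exact hne (Finset.eq_of_subset_of_card_le h2 (by omega))

lemma sum_inc_sq {G : Finset (Fin (2 * m))} (h2 : G.card = 2) :
    ∑ v : Fin (2 * m), inc G {v} * inc G {v} = 2 := by
  have hterm : ∀ v ∈ (Finset.univ : Finset (Fin (2 * m))),
      inc G {v} * inc G {v} = if v ∈ G then (1 : ℝ) else 0 := by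
    intro v _
    by_cases hv : v ∈ G
    · rw [if_pos hv, inc_single_sq h2 hv]
    · rw [if_neg hv, inc_single_zero hv, mul_zero]
  rw [Finset.sum_congr rfl hterm, Finset.sum_boole, Finset.filter_univ_mem, h2]
  norm_num

/-- off-diagonal entries of `L↑` at a pair with at least one crossing edge equal
minus the incidence product -/
lemma LupE_cross_offdiag (hm : 1 ≤ m) (F G : KSet (Fin (2 * m)) 2)
    (hne : F.1 ≠ G.1) (hcr : ¬ ∀ v ∈ G.1, ∀ w ∈ G.1, v.val / m = w.val / m) :
    -(LupE (bipartite2 m) 2 F G) = ∑ v : Fin (2 * m), inc F.1 {v} * inc G.1 {v} := by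
  rw [LupE_offdiag _ _ _ hne]
  have hle := inter_card_le_one F.2 G.2 hne
  rcases Nat.lt_or_ge (F.1 ∩ G.1).card 1 with h | h
  · -- disjoint
    have hdisj : F.1 ∩ G.1 = ∅ := Finset.card_eq_zero.mp (by omega)
    have hcard : (F.1 ∪ G.1).card = 4 := by
      have h4 := Finset.card_union_add_card_inter F.1 G.1
      rw [F.2, G.2, hdisj, Finset.card_empty] at h4; omega
    have hnot : F.1 ∪ G.1 ∉ (bipartite2 m).dfaces 3 := by
      intro hmem; rw [mem_dfaces3_iff] at hmem; omega
    rw [if_neg hnot, neg_zero]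
    symm
    apply Finset.sum_eq_zero
    intro v _
    by_cases hvF : v ∈ F.1
    · have hvG : v ∉ G.1 := fun hg => by
        have : v ∈ F.1 ∩ G.1 := Finset.mem_inter.mpr ⟨hvF, hg⟩
        rw [hdisj] at this; simp at this
      rw [inc_single_zero hvG, mul_zero]
    · rw [inc_single_zero hvF, zero_mul]
  · -- share a vertex
    have h1 : (F.1 ∩ G.1).card = 1 := le_antisymm hle h
    obtain ⟨v₀, hv₀⟩ := Finset.card_eq_one.mp h1
    have hv₀m := Finset.mem_inter.mp (hv₀ ▸ Finset.mem_singleton_self v₀)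
    have hcard : (F.1 ∪ G.1).card = 3 := by
      have h4 := Finset.card_union_add_card_inter F.1 G.1
      rw [F.2, G.2, hv₀, Finset.card_singleton] at h4; omega
    have hface : F.1 ∪ G.1 ∈ (bipartite2 m).dfaces 3 := by
      rw [mem_dfaces3_iff]
      refine ⟨hcard, ?_⟩
      push_neg at hcr
      obtain ⟨v, hv, w, hw, hvw⟩ := hcr
      exact ⟨v, Finset.mem_union_right _ hv, w, Finset.mem_union_right _ hw, hvw⟩
    rw [if_pos hface,
      inc_sign_identity hcard Finset.subset_union_left Finset.subset_union_right
        F.2 G.2 hne hv₀, neg_neg]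
    symm
    apply Fintype.sum_eq_single v₀
    intro v hv
    by_cases hvF : v ∈ F.1
    · have hvG : v ∉ G.1 := fun hg => hv (by
        have hx : v ∈ F.1 ∩ G.1 := Finset.mem_inter.mpr ⟨hvF, hg⟩
        rw [hv₀] at hx; simpa using hx)
      rw [inc_single_zero hvG, mul_zero]
    · rw [inc_single_zero hvF, zero_mul]

lemma LupE_inner_block (hm : 1 ≤ m) (F F' : InT m) :
    LupE (bipartite2 m) 2 F.1 F'.1 = if F = F' then (m : ℝ) else 0 := by
  by_cases h : F = F'
  · subst h
    rw [if_pos rfl, LupE_diag]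
    obtain ⟨a, b, hab, hpab, hFe⟩ := inner_form F.1.2 F.2
    rw [hFe, count_inner hm hab hpab]
  · rw [if_neg h]
    have hne : F.1.1 ≠ F'.1.1 := fun he => h (Subtype.ext (Subtype.ext he))
    have hnot : F.1.1 ∪ F'.1.1 ∉ (bipartite2 m).dfaces 3 := by
      intro hmem
      rw [mem_dfaces3_iff] at hmem
      obtain ⟨hc3, v, hv, w, hw, hvw⟩ := hmem
      have hint : (F.1.1 ∩ F'.1.1).card = 1 := by
        have h4 := Finset.card_union_add_card_inter F.1.1 F'.1.1
        rw [F.1.2, F'.1.2, hc3] at h4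
        have := inter_card_le_one F.1.2 F'.1.2 hne
        omega
      obtain ⟨u, hu⟩ := Finset.card_eq_one.mp hint
      have hum := Finset.mem_inter.mp (hu ▸ Finset.mem_singleton_self u)
      rcases Finset.mem_union.mp hv with hvF | hvF <;>
        rcases Finset.mem_union.mp hw with hwF | hwF
      · exact hvw (F.2 v hvF w hwF)
      · exact hvw ((F.2 v hvF u hum.1).trans (F'.2 u hum.2 w hwF))
      · exact hvw ((F'.2 v hvF u hum.2).trans (F.2 u hum.1 w hwF))
      · exact hvw (F'.2 v hvF w hwF)
    rw [LupE_offdiag _ _ _ hne, if_neg hnot]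

lemma LupE_cross_diag (hm : 1 ≤ m) (G : OutT m) :
    LupE (bipartite2 m) 2 G.1 G.1 = 2 * (m : ℝ) - 2 := by
  rw [LupE_diag]
  obtain ⟨a, b, ha, hb, hab, hGe⟩ := cross_form hm G.1.2 G.2
  rw [hGe, count_cross hm ha hb]
  rw [Nat.cast_sub (by omega)]
  push_cast
  ring

end Entries
section Mats
variable {m : ℕ}

def BoutM (m : ℕ) : Matrix (OutT m) (Fin (2 * m)) ℝ := fun G v => inc G.1.1 {v}
def BinM (m : ℕ) : Matrix (InT m) (Fin (2 * m)) ℝ := fun F v => inc F.1.1 {v}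
def Amat (m : ℕ) : Matrix (Fin (2 * m)) (Fin (2 * m)) ℝ :=
  fun v w => if v.val / m ≠ w.val / m then 1 else 0
def Pmat (m : ℕ) : Matrix (Fin (2 * m)) (Fin (2 * m)) ℝ :=
  fun v w => if v.val / m = w.val / m then 1 else 0

lemma pair_of_mem {F : Finset (Fin (2 * m))} (h2 : F.card = 2) {v : Fin (2 * m)}
    (hv : v ∈ F) : ∃ x, x ≠ v ∧ F = {v, x} := by
  obtain ⟨c, d, hcd, rfl⟩ := Finset.card_eq_two.mp h2
  simp only [Finset.mem_insert, Finset.mem_singleton] at hv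
  rcases hv with rfl | rfl
  · exact ⟨d, fun h => hcd h.symm, rfl⟩
  · exact ⟨c, fun h => hcd h, Finset.pair_comm c v⟩

lemma inc_pair_prod {v w : Fin (2 * m)} (h : v ≠ w) :
    inc {v, w} ({v} : Finset (Fin (2 * m))) * inc {v, w} {w} = -1 := by
  rcases h.lt_or_gt with hlt | hlt
  · rw [inc_pair_min hlt, inc_pair_max hlt]; ring
  · rw [Finset.pair_comm, inc_pair_max hlt, inc_pair_min hlt]; ring

/-- filter-to-part conversions -/
lemma filter_part_lt (hm : 1 ≤ m) {w : Fin (2 * m)} (hw : w.val < m) :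
    ((Finset.univ : Finset (Fin (2 * m))).filter fun x => x.val / m = w.val / m) =
      Finset.univ.filter fun x => x.val < m := by
  apply Finset.filter_congr
  intro x _
  have h1 : w.val / m = 0 := Nat.div_eq_of_lt hw
  rcases part_cases hm x with ⟨h3, h4⟩ | ⟨h3, h4⟩ <;> rw [h3, h1] <;> omega

lemma filter_part_ge (hm : 1 ≤ m) {w : Fin (2 * m)} (hw : m ≤ w.val) :
    ((Finset.univ : Finset (Fin (2 * m))).filter fun x => x.val / m = w.val / m) =
      Finset.univ.filter fun x => m ≤ x.val := by
  apply Finset.filter_congr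
  intro x _
  have h1 : w.val / m = 1 := by rcases part_cases hm w with h | h <;> omega
  rcases part_cases hm x with ⟨h3, h4⟩ | ⟨h3, h4⟩ <;> rw [h3, h1] <;> omega

lemma sum_inc_part_lt (hm : 1 ≤ m) {a b : Fin (2 * m)} (ha : a.val < m) (hb : m ≤ b.val) :
    ∑ v ∈ Finset.univ.filter (fun v : Fin (2 * m) => v.val < m),
      inc ({a, b} : Finset (Fin (2 * m))) {v} = -1 := by
  have hab : a < b := by rw [Fin.lt_def]; omega
  rw [Finset.sum_eq_single_of_mem a
    (Finset.mem_filter.mpr ⟨Finset.mem_univ _, ha⟩) ?_, inc_pair_min hab]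
  intro v hv hne
  have hvm : v.val < m := (Finset.mem_filter.mp hv).2
  have : v ∉ ({a, b} : Finset (Fin (2 * m))) := by
    simp only [Finset.mem_insert, Finset.mem_singleton]
    push_neg
    exact ⟨hne, fun h => by rw [h] at hvm; omega⟩
  exact inc_single_zero this

lemma sum_inc_part_ge (hm : 1 ≤ m) {a b : Fin (2 * m)} (ha : a.val < m) (hb : m ≤ b.val) :
    ∑ v ∈ Finset.univ.filter (fun v : Fin (2 * m) => m ≤ v.val),
      inc ({a, b} : Finset (Fin (2 * m))) {v} = 1 := by
  have hab : a < b := by rw [Fin.lt_def]; omega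
  rw [Finset.sum_eq_single_of_mem b
    (Finset.mem_filter.mpr ⟨Finset.mem_univ _, hb⟩) ?_, inc_pair_max hab]
  intro v hv hne
  have hvm : m ≤ v.val := (Finset.mem_filter.mp hv).2
  have : v ∉ ({a, b} : Finset (Fin (2 * m))) := by
    simp only [Finset.mem_insert, Finset.mem_singleton]
    push_neg
    exact ⟨fun h => by rw [h] at hvm; omega, hne⟩
  exact inc_single_zero this

/-- `N = B_out B_outᵀ` -/
lemma N_eq_BBt (hm : 1 ≤ m) (N : Matrix (OutT m) (OutT m) ℝ)
    (hN : ∀ F G, N F G =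
      (if F = G then 2 * (m : ℝ) else 0) - LupE (bipartite2 m) 2 F.1 G.1) :
    N = BoutM m * (BoutM m)ᵀ := by
  ext G G'
  rw [hN, Matrix.mul_apply]
  simp only [Matrix.transpose_apply, BoutM]
  by_cases h : G = G'
  · subst h
    rw [if_pos rfl, LupE_cross_diag hm, sum_inc_sq G.1.2]
    ring
  · rw [if_neg h]
    have hne : G.1.1 ≠ G'.1.1 := fun he => h (Subtype.ext (Subtype.ext he))
    rw [zero_sub]
    exact LupE_cross_offdiag hm G.1 G'.1 hne G'.2

/-- `M = B_in B_outᵀ` -/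
lemma M_eq_BBt (hm : 1 ≤ m) (M : Matrix (InT m) (OutT m) ℝ)
    (hM : ∀ F G, M F G = -(LupE (bipartite2 m) 2 F.1 G.1)) :
    M = BinM m * (BoutM m)ᵀ := by
  ext F G
  rw [hM, Matrix.mul_apply]
  simp only [Matrix.transpose_apply, BinM, BoutM]
  have hne : F.1.1 ≠ G.1.1 := fun he => G.2 (by rw [← he]; exact F.2)
  exact LupE_cross_offdiag hm F.1 G.1 hne G.2

lemma count_cross_mem (hm : 1 ≤ m) (v : Fin (2 * m)) :
    ((Finset.univ.filter fun F : Finset (Fin (2 * m)) =>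
        F.card = 2 ∧ ¬ ∀ x ∈ F, ∀ w ∈ F, x.val / m = w.val / m).filter
      fun F => v ∈ F).card = m := by
  have himg : ((Finset.univ.filter fun F : Finset (Fin (2 * m)) =>
      F.card = 2 ∧ ¬ ∀ x ∈ F, ∀ w ∈ F, x.val / m = w.val / m).filter
        fun F => v ∈ F) =
      (Finset.univ.filter fun x : Fin (2 * m) => x.val / m ≠ v.val / m).image
        (fun x => {v, x}) := by
    ext F
    simp only [Finset.mem_filter, Finset.mem_image, Finset.mem_univ, true_and]
    constructor
    · rintro ⟨⟨h2, hcr⟩, hv⟩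
      obtain ⟨x, hxv, rfl⟩ := pair_of_mem h2 hv
      refine ⟨x, ?_, rfl⟩
      push_neg at hcr
      obtain ⟨c, hc, d, hd, hcd⟩ := hcr
      simp only [Finset.mem_insert, Finset.mem_singleton] at hc hd
      rcases hc with rfl | rfl <;> rcases hd with rfl | rfl <;>
        first
        | exact absurd rfl hcd
        | exact fun h => hcd (by omega)
        | exact fun h => hcd (by rw [h])
        | exact fun h => hcd (by rw [h])
    · rintro ⟨x, hx, rfl⟩
      have hxv : x ≠ v := fun h => hx (by rw [h])
      refine ⟨⟨card_pair_of_ne (fun h => hxv h.symm), ?_⟩, by simp⟩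
      intro hall
      exact hx (hall x (by simp) v (by simp))
  rw [himg, Finset.card_image_of_injOn, card_part_ne hm v]
  intro x hx y hy hxy
  have hxy' : ({v, x} : Finset (Fin (2 * m))) = {v, y} := hxy
  rw [Finset.mem_coe, Finset.mem_filter] at hx hy
  have hxv : x ≠ v := fun h => hx.2 (by rw [h])
  have hmem : x ∈ ({v, y} : Finset (Fin (2 * m))) := by rw [← hxy']; simp
  simp only [Finset.mem_insert, Finset.mem_singleton] at hmem
  tauto

lemma count_inner_mem (hm : 1 ≤ m) (v : Fin (2 * m)) :
    ((Finset.univ.filter fun F : Finset (Fin (2 * m)) =>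
        F.card = 2 ∧ ∀ x ∈ F, ∀ w ∈ F, x.val / m = w.val / m).filter
      fun F => v ∈ F).card = m - 1 := by
  have himg : ((Finset.univ.filter fun F : Finset (Fin (2 * m)) =>
      F.card = 2 ∧ ∀ x ∈ F, ∀ w ∈ F, x.val / m = w.val / m).filter
        fun F => v ∈ F) =
      ((Finset.univ.filter fun x : Fin (2 * m) => x.val / m = v.val / m).erase v).image
        (fun x => {v, x}) := by
    ext F
    simp only [Finset.mem_filter, Finset.mem_image, Finset.mem_univ, true_and,
      Finset.mem_erase]
    constructor
    · rintro ⟨⟨h2, hin⟩, hv⟩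
      obtain ⟨x, hxv, rfl⟩ := pair_of_mem h2 hv
      exact ⟨x, ⟨hxv, hin x (by simp) v (by simp)⟩, rfl⟩
    · rintro ⟨x, ⟨hxv, hx⟩, rfl⟩
      refine ⟨⟨card_pair_of_ne (fun h => hxv h.symm), ?_⟩, by simp⟩
      intro c hc d hd
      simp only [Finset.mem_insert, Finset.mem_singleton] at hc hd
      rcases hc with rfl | rfl <;> rcases hd with rfl | rfl <;>
        first
        | rfl
        | exact hx.symm
        | exact hx
  have hcv : v ∈ Finset.univ.filter (fun x : Fin (2 * m) => x.val / m = v.val / m) :=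
    Finset.mem_filter.mpr ⟨Finset.mem_univ _, rfl⟩
  rw [himg, Finset.card_image_of_injOn, Finset.card_erase_of_mem hcv, card_part_eq hm v]
  intro x hx y hy hxy
  have hxy' : ({v, x} : Finset (Fin (2 * m))) = {v, y} := hxy
  rw [Finset.mem_coe, Finset.mem_erase] at hx hy
  have hxv : x ≠ v := hx.1
  have hmem : x ∈ ({v, y} : Finset (Fin (2 * m))) := by rw [← hxy']; simp
  simp only [Finset.mem_insert, Finset.mem_singleton] at hmem
  tauto

end Mats
section Gram
variable {m : ℕ}

lemma prod_zero_of_ne {F : Finset (Fin (2 * m))} (h2 : F.card = 2) {v w : Fin (2 * m)}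
    (hvw : v ≠ w) (hne : F ≠ {v, w}) : inc F {v} * inc F {w} = 0 := by
  by_cases hv : v ∈ F
  · by_cases hw : w ∈ F
    · exfalso
      apply hne
      refine (Finset.eq_of_subset_of_card_le ?_ ?_).symm
      · intro x hx
        simp only [Finset.mem_insert, Finset.mem_singleton] at hx
        rcases hx with rfl | rfl <;> assumption
      · rw [card_pair_of_ne hvw, h2]
    · rw [inc_single_zero hw, mul_zero]
  · rw [inc_single_zero hv, zero_mul]

lemma Cin_eq (hm : 1 ≤ m) :
    (BinM m)ᵀ * BinM m =
      (m : ℝ) • (1 : Matrix (Fin (2 * m)) (Fin (2 * m)) ℝ) - Pmat m := by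
  ext v w
  rw [Matrix.mul_apply]
  simp only [Matrix.transpose_apply, BinM, Matrix.sub_apply, Matrix.smul_apply,
    Matrix.one_apply, Pmat, smul_eq_mul]
  have hsum := sum_in m (fun Fs => inc Fs {v} * inc Fs {w})
  rw [hsum]
  by_cases hvw : v = w
  · subst hvw
    rw [if_pos rfl, if_pos rfl]
    rw [← Finset.sum_filter_of_ne (p := fun F => v ∈ F)
      (fun F _ hne => by by_contra hv; exact hne (by rw [inc_single_zero hv, mul_zero]))]
    have hone : ∀ F ∈ ((Finset.univ.filter fun F : Finset (Fin (2 * m)) =>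
        F.card = 2 ∧ ∀ x ∈ F, ∀ w ∈ F, x.val / m = w.val / m).filter fun F => v ∈ F),
        inc F {v} * inc F {v} = 1 := by
      intro F hF
      rw [Finset.mem_filter, Finset.mem_filter] at hF
      exact inc_single_sq hF.1.2.1 hF.2
    rw [Finset.sum_congr rfl hone, Finset.sum_const, count_inner_mem hm v,
      nsmul_eq_mul, mul_one, Nat.cast_sub hm]
    push_cast
    ring
  · rw [if_neg hvw]
    by_cases hp : v.val / m = w.val / m
    · rw [if_pos hp]
      have hmem : ({v, w} : Finset (Fin (2 * m))) ∈ Finset.univ.filter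
          fun F : Finset (Fin (2 * m)) =>
            F.card = 2 ∧ ∀ x ∈ F, ∀ w' ∈ F, x.val / m = w'.val / m := by
        rw [Finset.mem_filter]
        refine ⟨Finset.mem_univ _, card_pair_of_ne hvw, ?_⟩
        intro c hc d hd
        simp only [Finset.mem_insert, Finset.mem_singleton] at hc hd
        rcases hc with rfl | rfl <;> rcases hd with rfl | rfl <;>
          first
          | rfl
          | exact hp
          | exact hp.symm
      rw [Finset.sum_eq_single_of_mem _ hmem
        (fun F hF hne => prod_zero_of_ne (Finset.mem_filter.mp hF).2.1 hvw hne),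
        inc_pair_prod hvw]
      ring
    · rw [if_neg hp]
      rw [Finset.sum_eq_zero ?_]
      · ring
      intro F hF
      rw [Finset.mem_filter] at hF
      refine prod_zero_of_ne hF.2.1 hvw (fun he => hp ?_)
      exact hF.2.2 v (by rw [he]; simp) w (by rw [he]; simp)

lemma Cout_eq (hm : 1 ≤ m) :
    (BoutM m)ᵀ * BoutM m =
      (m : ℝ) • (1 : Matrix (Fin (2 * m)) (Fin (2 * m)) ℝ) - Amat m := by
  ext v w
  rw [Matrix.mul_apply]
  simp only [Matrix.transpose_apply, BoutM, Matrix.sub_apply, Matrix.smul_apply,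
    Matrix.one_apply, Amat, smul_eq_mul]
  have hsum := sum_out m (fun Fs => inc Fs {v} * inc Fs {w})
  rw [hsum]
  by_cases hvw : v = w
  · subst hvw
    rw [if_pos rfl, if_neg (fun h => h rfl)]
    rw [← Finset.sum_filter_of_ne (p := fun F => v ∈ F)
      (fun F _ hne => by by_contra hv; exact hne (by rw [inc_single_zero hv, mul_zero]))]
    have hone : ∀ F ∈ ((Finset.univ.filter fun F : Finset (Fin (2 * m)) =>
        F.card = 2 ∧ ¬ ∀ x ∈ F, ∀ w ∈ F, x.val / m = w.val / m).filter fun F => v ∈ F),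
        inc F {v} * inc F {v} = 1 := by
      intro F hF
      rw [Finset.mem_filter, Finset.mem_filter] at hF
      exact inc_single_sq hF.1.2.1 hF.2
    rw [Finset.sum_congr rfl hone, Finset.sum_const, count_cross_mem hm v,
      nsmul_eq_mul, mul_one]
    ring
  · rw [if_neg hvw]
    by_cases hp : v.val / m = w.val / m
    · rw [if_neg (fun h => h hp)]
      rw [Finset.sum_eq_zero ?_]
      · ring
      intro F hF
      rw [Finset.mem_filter] at hF
      refine prod_zero_of_ne hF.2.1 hvw (fun he => hF.2.2 ?_)
      intro c hc d hd
      rw [he] at hc hd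
      simp only [Finset.mem_insert, Finset.mem_singleton] at hc hd
      rcases hc with rfl | rfl <;> rcases hd with rfl | rfl <;>
        first
        | rfl
        | exact hp
        | exact hp.symm
    · rw [if_pos hp]
      have hmem : ({v, w} : Finset (Fin (2 * m))) ∈ Finset.univ.filter
          fun F : Finset (Fin (2 * m)) =>
            F.card = 2 ∧ ¬ ∀ x ∈ F, ∀ w' ∈ F, x.val / m = w'.val / m := by
        rw [Finset.mem_filter]
        refine ⟨Finset.mem_univ _, card_pair_of_ne hvw, fun hall => hp ?_⟩
        exact hall v (by simp) w (by simp)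
      rw [Finset.sum_eq_single_of_mem _ hmem
        (fun F hF hne => prod_zero_of_ne (Finset.mem_filter.mp hF).2.1 hvw hne),
        inc_pair_prod hvw]
      ring

lemma BP_entry (hm : 1 ≤ m) (G : OutT m) (w : Fin (2 * m)) :
    (BoutM m * Pmat m) G w = if w.val < m then (-1 : ℝ) else 1 := by
  rw [Matrix.mul_apply]
  obtain ⟨a, b, ha, hb, hab, hGe⟩ := cross_form hm G.1.2 G.2
  simp only [BoutM, Pmat, hGe]
  have hconv : ∀ v ∈ (Finset.univ : Finset (Fin (2 * m))),
      inc {a, b} {v} * (if v.val / m = w.val / m then (1 : ℝ) else 0) =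
      if v.val / m = w.val / m then inc {a, b} {v} else 0 := by
    intro v _; split_ifs <;> ring
  rw [Finset.sum_congr rfl hconv, ← Finset.sum_filter]
  rcases part_cases hm w with ⟨h1, h2⟩ | ⟨h1, h2⟩
  · rw [filter_part_lt hm h2, sum_inc_part_lt hm ha hb, if_pos h2]
  · rw [filter_part_ge hm h2, sum_inc_part_ge hm ha hb, if_neg (by omega)]

lemma BPB_eq (hm : 1 ≤ m) :
    BoutM m * Pmat m * (BoutM m)ᵀ =
      Matrix.of (fun _ _ : OutT m => (2 : ℝ)) := by
  ext G G'
  rw [Matrix.mul_apply]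
  obtain ⟨a, b, ha, hb, hab, hGe⟩ := cross_form hm G'.1.2 G'.2
  have hconv : ∀ w ∈ (Finset.univ : Finset (Fin (2 * m))),
      (BoutM m * Pmat m) G w * (BoutM m)ᵀ w G' =
      (if w.val < m then (-1 : ℝ) else 1) * inc {a, b} {w} := by
    intro w _
    rw [BP_entry hm G w]
    simp only [Matrix.transpose_apply, BoutM, hGe]
  rw [Finset.sum_congr rfl hconv,
    ← Finset.sum_filter_add_sum_filter_not Finset.univ (fun w : Fin (2 * m) => w.val < m)]
  have e1 : ∀ w ∈ Finset.univ.filter (fun w : Fin (2 * m) => w.val < m),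
      (if w.val < m then (-1 : ℝ) else 1) * inc {a, b} {w} = -inc {a, b} {w} := by
    intro w hw
    rw [if_pos (Finset.mem_filter.mp hw).2]; ring
  have e2 : ∀ w ∈ Finset.univ.filter (fun w : Fin (2 * m) => ¬ w.val < m),
      (if w.val < m then (-1 : ℝ) else 1) * inc {a, b} {w} = inc {a, b} {w} := by
    intro w hw
    rw [if_neg (Finset.mem_filter.mp hw).2]; ring
  rw [Finset.sum_congr rfl e1, Finset.sum_congr rfl e2, Finset.sum_neg_distrib,
    sum_inc_part_lt hm ha hb]
  have hfc : (Finset.univ.filter (fun w : Fin (2 * m) => ¬ w.val < m)) =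
      Finset.univ.filter (fun w : Fin (2 * m) => m ≤ w.val) := by
    apply Finset.filter_congr; intro x _; constructor <;> intros <;> omega
  rw [hfc, sum_inc_part_ge hm ha hb]
  norm_num

lemma AA_eq (hm : 1 ≤ m) : Amat m * Amat m = (m : ℝ) • Pmat m := by
  ext v w
  rw [Matrix.mul_apply]
  simp only [Amat, Pmat, Matrix.smul_apply, smul_eq_mul]
  have hconv : ∀ u ∈ (Finset.univ : Finset (Fin (2 * m))),
      (if v.val / m ≠ u.val / m then (1 : ℝ) else 0) *
        (if u.val / m ≠ w.val / m then (1 : ℝ) else 0) =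
      if v.val / m ≠ u.val / m ∧ u.val / m ≠ w.val / m then 1 else 0 := by
    intro u _
    rcases Decidable.em (v.val / m ≠ u.val / m) with h1 | h1 <;>
      rcases Decidable.em (u.val / m ≠ w.val / m) with h2 | h2 <;>
      simp [h1, h2]
  rw [Finset.sum_congr rfl hconv, Finset.sum_boole]
  by_cases hp : v.val / m = w.val / m
  · rw [if_pos hp]
    have he : (Finset.univ.filter fun u : Fin (2 * m) =>
        v.val / m ≠ u.val / m ∧ u.val / m ≠ w.val / m) =
        Finset.univ.filter fun u => u.val / m ≠ v.val / m := by
      apply Finset.filter_congr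
      intro u _
      rw [hp]
      constructor
      · intro h; exact fun h2 => h.1 (hp ▸ h2.symm)
      · intro h; exact ⟨fun h2 => h (hp ▸ h2.symm), h⟩
    rw [he, card_part_ne hm v]
    ring
  · rw [if_neg hp]
    have he : (Finset.univ.filter fun u : Fin (2 * m) =>
        v.val / m ≠ u.val / m ∧ u.val / m ≠ w.val / m) = ∅ := by
      rw [Finset.filter_eq_empty_iff]
      intro u _
      rcases part_cases hm u with ⟨h1, _⟩ | ⟨h1, _⟩ <;>
        rcases part_cases hm v with ⟨h3, _⟩ | ⟨h3, _⟩ <;>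
        rcases part_cases hm w with ⟨h5, _⟩ | ⟨h5, _⟩ <;>
        simp [h1, h3, h5] <;> omega
    rw [he]
    simp
lemma PA_eq (hm : 1 ≤ m) : Pmat m * Amat m = (m : ℝ) • Amat m := by
  ext v w
  rw [Matrix.mul_apply]
  simp only [Amat, Pmat, Matrix.smul_apply, smul_eq_mul]
  have hconv : ∀ u ∈ (Finset.univ : Finset (Fin (2 * m))),
      (if v.val / m = u.val / m then (1 : ℝ) else 0) *
        (if u.val / m ≠ w.val / m then (1 : ℝ) else 0) =
      if v.val / m = u.val / m ∧ u.val / m ≠ w.val / m then 1 else 0 := by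
    intro u _
    rcases Decidable.em (v.val / m = u.val / m) with h1 | h1 <;>
      rcases Decidable.em (u.val / m ≠ w.val / m) with h2 | h2 <;>
      simp [h1, h2]
  rw [Finset.sum_congr rfl hconv, Finset.sum_boole]
  by_cases hp : v.val / m = w.val / m
  · rw [if_neg (fun h => h hp)]
    have he : (Finset.univ.filter fun u : Fin (2 * m) =>
        v.val / m = u.val / m ∧ u.val / m ≠ w.val / m) = ∅ := by
      rw [Finset.filter_eq_empty_iff]
      intro u _
      rw [hp]
      tauto
    rw [he]
    simp
  · rw [if_pos hp]
    have he : (Finset.univ.filter fun u : Fin (2 * m) =>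
        v.val / m = u.val / m ∧ u.val / m ≠ w.val / m) =
        Finset.univ.filter fun u => u.val / m = v.val / m := by
      apply Finset.filter_congr
      intro u _
      constructor
      · intro h; exact h.1.symm
      · intro h; exact ⟨h.symm, fun h2 => hp (h ▸ h2)⟩
    rw [he, card_part_eq hm v]
    ring

end Gram
section ColSum
variable {m : ℕ}

lemma cross_mem_image (hm : 1 ≤ m) (v : Fin (2 * m)) :
    ((Finset.univ.filter fun F : Finset (Fin (2 * m)) =>
        F.card = 2 ∧ ¬ ∀ x ∈ F, ∀ w ∈ F, x.val / m = w.val / m).filter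
      fun F => v ∈ F) =
      (Finset.univ.filter fun x : Fin (2 * m) => x.val / m ≠ v.val / m).image
        (fun x => {v, x}) := by
  ext F
  simp only [Finset.mem_filter, Finset.mem_image, Finset.mem_univ, true_and]
  constructor
  · rintro ⟨⟨h2, hcr⟩, hv⟩
    obtain ⟨x, hxv, rfl⟩ := pair_of_mem h2 hv
    refine ⟨x, ?_, rfl⟩
    push_neg at hcr
    obtain ⟨c, hc, d, hd, hcd⟩ := hcr
    simp only [Finset.mem_insert, Finset.mem_singleton] at hc hd
    rcases hc with rfl | rfl <;> rcases hd with rfl | rfl <;>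
      first
      | exact absurd rfl hcd
      | exact fun h => hcd (by omega)
      | exact fun h => hcd (by rw [h])
  · rintro ⟨x, hx, rfl⟩
    have hxv : x ≠ v := fun h => hx (by rw [h])
    refine ⟨⟨card_pair_of_ne (fun h => hxv h.symm), ?_⟩, by simp⟩
    intro hall
    exact hx (hall x (by simp) v (by simp))

lemma colsum (hm : 1 ≤ m) (v : Fin (2 * m)) :
    ∑ G : OutT m, inc G.1.1 {v} = if v.val < m then -(m : ℝ) else m := by
  have hsum := sum_out m (fun Fs => inc Fs {v})
  rw [hsum,
    ← Finset.sum_filter_of_ne (p := fun F => v ∈ F)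
      (fun F _ hne => by by_contra hv; exact hne (inc_single_zero hv)),
    cross_mem_image hm v, Finset.sum_image ?inj]
  case inj =>
    intro x hx y hy hxy
    have hxy' : ({v, x} : Finset (Fin (2 * m))) = {v, y} := hxy
    rw [Finset.mem_coe, Finset.mem_filter] at hx hy
    have hxv : x ≠ v := fun h => hx.2 (by rw [h])
    have hmem : x ∈ ({v, y} : Finset (Fin (2 * m))) := by rw [← hxy']; simp
    simp only [Finset.mem_insert, Finset.mem_singleton] at hmem
    tauto
  rcases part_cases hm v with ⟨h1, h2⟩ | ⟨h1, h2⟩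
  · rw [if_pos h2, filter_part_ne_of_lt hm h2]
    have hterm : ∀ x ∈ Finset.univ.filter (fun x : Fin (2 * m) => m ≤ x.val),
        inc {v, x} ({v} : Finset (Fin (2 * m))) = -1 := by
      intro x hx
      have hx2 := (Finset.mem_filter.mp hx).2
      exact inc_pair_min (by rw [Fin.lt_def]; omega)
    rw [Finset.sum_congr rfl hterm, Finset.sum_const, card_filter_ge]
    simp
  · rw [if_neg (by omega), filter_part_ne_of_ge hm h2]
    have hterm : ∀ x ∈ Finset.univ.filter (fun x : Fin (2 * m) => x.val < m),
        inc {v, x} ({v} : Finset (Fin (2 * m))) = 1 := by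
      intro x hx
      have hx2 := (Finset.mem_filter.mp hx).2
      rw [Finset.pair_comm]
      exact inc_pair_max (by rw [Fin.lt_def]; omega)
    rw [Finset.sum_congr rfl hterm, Finset.sum_const, card_filter_lt]
    simp

lemma N_mulVec_one (hm : 1 ≤ m) (N : Matrix (OutT m) (OutT m) ℝ)
    (hN : ∀ F G, N F G =
      (if F = G then 2 * (m : ℝ) else 0) - LupE (bipartite2 m) 2 F.1 G.1) :
    N.mulVec (fun _ => 1) = (fun _ => 2 * (m : ℝ)) := by
  rw [N_eq_BBt hm N hN]
  funext G
  simp only [Matrix.mulVec, dotProduct, mul_one, Matrix.mul_apply,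
    Matrix.transpose_apply, BoutM]
  rw [Finset.sum_comm]
  have hswap : ∀ w ∈ (Finset.univ : Finset (Fin (2 * m))),
      ∑ G' : OutT m, inc G.1.1 {w} * inc G'.1.1 {w} =
      inc G.1.1 {w} * (if w.val < m then -(m : ℝ) else m) := by
    intro w _
    rw [← Finset.mul_sum, colsum hm w]
  rw [Finset.sum_congr rfl hswap]
  obtain ⟨a, b, ha, hb, hab, hGe⟩ := cross_form hm G.1.2 G.2
  simp only [hGe]
  rw [← Finset.sum_filter_of_ne (p := fun w => w ∈ ({a, b} : Finset (Fin (2 * m))))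
    (fun w _ hne => by by_contra hw; exact hne (by rw [inc_single_zero hw, zero_mul]))]
  have hfe : (Finset.univ.filter fun w => w ∈ ({a, b} : Finset (Fin (2 * m)))) =
      {a, b} := by
    ext w; simp
  rw [hfe, Finset.sum_pair hab.ne, inc_pair_min hab, inc_pair_max hab,
    if_pos ha, if_neg (by omega)]
  ring

end ColSum
section Spectral
variable {m : ℕ}

lemma eigen_transfer {ι κ : Type} [Fintype ι] [Fintype κ]
    (B : Matrix ι κ ℝ) (μ : ℝ) (hμ : μ ≠ 0) :
    Module.finrank ℝ (Module.End.eigenspace (Matrix.mulVecLin (B * Bᵀ)) μ) =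
      Module.finrank ℝ (Module.End.eigenspace (Matrix.mulVecLin (Bᵀ * B)) μ) := by
  set E1 := Module.End.eigenspace (Matrix.mulVecLin (B * Bᵀ)) μ with hE1
  set E2 := Module.End.eigenspace (Matrix.mulVecLin (Bᵀ * B)) μ with hE2
  have hmem1 : ∀ x, x ∈ E1 ↔ (B * Bᵀ) *ᵥ x = μ • x := fun x => by
    rw [hE1, Module.End.mem_eigenspace_iff, Matrix.mulVecLin_apply]
  have hmem2 : ∀ x, x ∈ E2 ↔ (Bᵀ * B) *ᵥ x = μ • x := fun x => by
    rw [hE2, Module.End.mem_eigenspace_iff, Matrix.mulVecLin_apply]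
  have h1 : ∀ x ∈ E1, Bᵀ *ᵥ x ∈ E2 := by
    intro x hx
    rw [hmem2]
    calc (Bᵀ * B) *ᵥ (Bᵀ *ᵥ x) = (Bᵀ * B * Bᵀ) *ᵥ x := Matrix.mulVec_mulVec _ _ _
      _ = (Bᵀ * (B * Bᵀ)) *ᵥ x := by rw [Matrix.mul_assoc]
      _ = Bᵀ *ᵥ ((B * Bᵀ) *ᵥ x) := (Matrix.mulVec_mulVec _ _ _).symm
      _ = Bᵀ *ᵥ (μ • x) := by rw [(hmem1 x).mp hx]
      _ = μ • (Bᵀ *ᵥ x) := Matrix.mulVec_smul _ _ _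
  have h2 : ∀ y ∈ E2, μ⁻¹ • (B *ᵥ y) ∈ E1 := by
    intro y hy
    rw [hmem1]
    have hb : (B * Bᵀ) *ᵥ (B *ᵥ y) = μ • (B *ᵥ y) := by
      calc (B * Bᵀ) *ᵥ (B *ᵥ y) = (B * Bᵀ * B) *ᵥ y := Matrix.mulVec_mulVec _ _ _
        _ = (B * (Bᵀ * B)) *ᵥ y := by rw [Matrix.mul_assoc]
        _ = B *ᵥ ((Bᵀ * B) *ᵥ y) := (Matrix.mulVec_mulVec _ _ _).symm
        _ = B *ᵥ (μ • y) := by rw [(hmem2 y).mp hy]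
        _ = μ • (B *ᵥ y) := Matrix.mulVec_smul _ _ _
    rw [Matrix.mulVec_smul, hb, smul_smul, smul_smul, mul_comm]
  let φ : E1 →ₗ[ℝ] E2 :=
    LinearMap.codRestrict E2 ((Matrix.mulVecLin Bᵀ).comp E1.subtype)
      (fun c => h1 c.1 c.2)
  let ψ : E2 →ₗ[ℝ] E1 :=
    LinearMap.codRestrict E1 ((μ⁻¹ • Matrix.mulVecLin B).comp E2.subtype)
      (fun c => h2 c.1 c.2)
  have hfg : φ.comp ψ = LinearMap.id := by
    apply LinearMap.ext
    intro y
    apply Subtype.ext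
    show Bᵀ *ᵥ (μ⁻¹ • (B *ᵥ y.1)) = y.1
    rw [Matrix.mulVec_smul, Matrix.mulVec_mulVec, (hmem2 y.1).mp y.2,
      inv_smul_smul₀ hμ]
  have hgf : ψ.comp φ = LinearMap.id := by
    apply LinearMap.ext
    intro x
    apply Subtype.ext
    show μ⁻¹ • (B *ᵥ (Bᵀ *ᵥ x.1)) = x.1
    rw [Matrix.mulVec_mulVec, (hmem1 x.1).mp x.2, inv_smul_smul₀ hμ]
  exact LinearEquiv.finrank_eq (LinearEquiv.ofLinear φ ψ hfg hgf)

lemma mem_eigen_C_iff (μ : ℝ) (x : Fin (2 * m) → ℝ) :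
    x ∈ Module.End.eigenspace
        (Matrix.mulVecLin ((m : ℝ) • (1 : Matrix (Fin (2 * m)) (Fin (2 * m)) ℝ)
          - Amat m)) μ ↔
      (Amat m) *ᵥ x = ((m : ℝ) - μ) • x := by
  rw [Module.End.mem_eigenspace_iff, Matrix.mulVecLin_apply, Matrix.sub_mulVec,
    Matrix.smul_mulVec, Matrix.one_mulVec]
  constructor
  · intro h
    have h2 := sub_eq_iff_eq_add.mp h
    rw [sub_smul, h2]
    abel
  · intro h
    rw [h, sub_smul]
    abel

lemma A_mulVec (hm : 1 ≤ m) (x : Fin (2 * m) → ℝ) (v : Fin (2 * m)) :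
    ((Amat m) *ᵥ x) v =
      if v.val < m then
        (∑ w ∈ Finset.univ.filter (fun w : Fin (2 * m) => m ≤ w.val), x w)
      else
        (∑ w ∈ Finset.univ.filter (fun w : Fin (2 * m) => w.val < m), x w) := by
  simp only [Matrix.mulVec, dotProduct, Amat]
  have hconv : ∀ w ∈ (Finset.univ : Finset (Fin (2 * m))),
      (if v.val / m ≠ w.val / m then (1 : ℝ) else 0) * x w =
      if w.val / m ≠ v.val / m then x w else 0 := by
    intro w _
    by_cases h : v.val / m = w.val / m
    · simp [h]
    · have h' : w.val / m ≠ v.val / m := Ne.symm h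
      simp [h, h']
  rw [Finset.sum_congr rfl hconv, ← Finset.sum_filter]
  rcases part_cases hm v with ⟨h1, h2⟩ | ⟨h1, h2⟩
  · rw [if_pos h2, filter_part_ne_of_lt hm h2]
  · rw [if_neg (by omega), filter_part_ne_of_ge hm h2]

def ufun (m : ℕ) : Fin (2 * m) → ℝ := fun v => if v.val < m then 1 else -1

lemma eig2m_finrank (hm : 1 ≤ m) :
    Module.finrank ℝ (Module.End.eigenspace
      (Matrix.mulVecLin ((m : ℝ) • (1 : Matrix (Fin (2 * m)) (Fin (2 * m)) ℝ)
        - Amat m)) (2 * (m : ℝ))) = 1 := by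
  have hm0 : (m : ℝ) ≠ 0 := Nat.cast_ne_zero.mpr (by omega)
  have hv0lt : (0 : ℕ) < 2 * m := by omega
  set v0 : Fin (2 * m) := ⟨0, hv0lt⟩ with hv0
  have hv0m : v0.val < m := by simp [hv0]; omega
  have hspan : Module.End.eigenspace
      (Matrix.mulVecLin ((m : ℝ) • (1 : Matrix (Fin (2 * m)) (Fin (2 * m)) ℝ)
        - Amat m)) (2 * (m : ℝ)) = Submodule.span ℝ {ufun m} := by
    ext x
    rw [mem_eigen_C_iff]
    constructor
    · intro h
      have hpt : ∀ v : Fin (2 * m),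
          (if v.val < m then
            (∑ w ∈ Finset.univ.filter (fun w : Fin (2 * m) => m ≤ w.val), x w)
          else
            (∑ w ∈ Finset.univ.filter (fun w : Fin (2 * m) => w.val < m), x w)) =
          ((m : ℝ) - 2 * m) * x v := by
        intro v
        have h2 := congrFun h v
        rw [A_mulVec hm] at h2
        simpa using h2
      have hconst0 : ∀ v : Fin (2 * m), v.val < m → x v = x v0 := by
        intro v hv
        have h1 := hpt v
        rw [if_pos hv] at h1
        have h2 := hpt v0
        rw [if_pos hv0m] at h2
        have h3 := h1.symm.trans h2
        have hc : ((m : ℝ) - 2 * m) ≠ 0 := by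
          intro hc
          apply hm0
          linarith
        exact mul_left_cancel₀ hc h3
      have hs0 : (∑ w ∈ Finset.univ.filter (fun w : Fin (2 * m) => w.val < m), x w) =
          (m : ℝ) * x v0 := by
        rw [Finset.sum_congr rfl
          (fun w hw => hconst0 w (Finset.mem_filter.mp hw).2),
          Finset.sum_const, card_filter_lt, nsmul_eq_mul]
      have hconst1 : ∀ v : Fin (2 * m), ¬ v.val < m → x v = -x v0 := by
        intro v hv
        have h1 := hpt v
        rw [if_neg hv, hs0] at h1
        have h4 : (m : ℝ) * (x v + x v0) = 0 := by ring_nf; ring_nf at h1; linarith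
        rcases mul_eq_zero.mp h4 with h5 | h5
        · exact absurd h5 hm0
        · linarith
      refine Submodule.mem_span_singleton.mpr ⟨x v0, funext fun v => ?_⟩
      simp only [Pi.smul_apply, ufun, smul_eq_mul]
      by_cases hv : v.val < m
      · rw [if_pos hv, mul_one, hconst0 v hv]
      · rw [if_neg hv, hconst1 v hv]; ring
    · intro h
      obtain ⟨a, rfl⟩ := Submodule.mem_span_singleton.mp h
      have hAu : (Amat m) *ᵥ ufun m = fun v => if v.val < m then -(m : ℝ) else m := by
        funext v
        rw [A_mulVec hm]
        have htge : ∀ w ∈ Finset.univ.filter (fun w : Fin (2 * m) => m ≤ w.val),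
            ufun m w = -1 := by
          intro w hw
          have hw2 := (Finset.mem_filter.mp hw).2
          simp only [ufun]
          rw [if_neg (by omega)]
        have htlt : ∀ w ∈ Finset.univ.filter (fun w : Fin (2 * m) => w.val < m),
            ufun m w = 1 := by
          intro w hw
          have hw2 := (Finset.mem_filter.mp hw).2
          simp only [ufun]
          rw [if_pos hw2]
        have hsge : (∑ w ∈ Finset.univ.filter (fun w : Fin (2 * m) => m ≤ w.val),
            ufun m w) = -(m : ℝ) := by
          rw [Finset.sum_congr rfl htge, Finset.sum_const, card_filter_ge]
          simp
        have hslt : (∑ w ∈ Finset.univ.filter (fun w : Fin (2 * m) => w.val < m),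
            ufun m w) = (m : ℝ) := by
          rw [Finset.sum_congr rfl htlt, Finset.sum_const, card_filter_lt]
          simp
        split_ifs with hv
        · exact hsge
        · exact hslt
      rw [Matrix.mulVec_smul, hAu]
      funext v
      simp only [Pi.smul_apply, smul_eq_mul, ufun]
      split_ifs with hv <;> ring
  rw [hspan]
  refine finrank_span_singleton (fun h0 => ?_)
  have := congrFun h0 v0
  rw [ufun, if_pos hv0m] at this
  simpa using this

lemma eigm_finrank (hm : 1 ≤ m) :
    Module.finrank ℝ (Module.End.eigenspace
      (Matrix.mulVecLin ((m : ℝ) • (1 : Matrix (Fin (2 * m)) (Fin (2 * m)) ℝ)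
        - Amat m)) ((m : ℝ))) = 2 * (m - 1) := by
  have hm0 : (m : ℝ) ≠ 0 := Nat.cast_ne_zero.mpr (by omega)
  set l0 : (Fin (2 * m) → ℝ) →ₗ[ℝ] ℝ :=
    ∑ w ∈ Finset.univ.filter (fun w : Fin (2 * m) => w.val < m), LinearMap.proj w with hl0d
  set l1 : (Fin (2 * m) → ℝ) →ₗ[ℝ] ℝ :=
    ∑ w ∈ Finset.univ.filter (fun w : Fin (2 * m) => m ≤ w.val), LinearMap.proj w with hl1d
  have hl0 : ∀ x, l0 x = ∑ w ∈ Finset.univ.filter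
      (fun w : Fin (2 * m) => w.val < m), x w := by
    intro x
    rw [hl0d, LinearMap.sum_apply]
    exact Finset.sum_congr rfl (fun w _ => LinearMap.proj_apply w x)
  have hl1 : ∀ x, l1 x = ∑ w ∈ Finset.univ.filter
      (fun w : Fin (2 * m) => m ≤ w.val), x w := by
    intro x
    rw [hl1d, LinearMap.sum_apply]
    exact Finset.sum_congr rfl (fun w _ => LinearMap.proj_apply w x)
  have hker : Module.End.eigenspace
      (Matrix.mulVecLin ((m : ℝ) • (1 : Matrix (Fin (2 * m)) (Fin (2 * m)) ℝ)
        - Amat m)) ((m : ℝ)) = LinearMap.ker (l0.prod l1) := by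
    ext x
    rw [mem_eigen_C_iff, sub_self, zero_smul, LinearMap.mem_ker]
    constructor
    · intro h
      have h0 := congrFun h (⟨0, by omega⟩ : Fin (2 * m))
      have h1 := congrFun h (⟨m, by omega⟩ : Fin (2 * m))
      rw [A_mulVec hm, if_pos (by simpa using (show 0 < m by omega))] at h0
      rw [A_mulVec hm, if_neg (by simp)] at h1
      show (l0 x, l1 x) = ((0 : ℝ), (0 : ℝ))
      rw [Prod.mk.injEq, hl0 x, hl1 x]
      exact ⟨by simpa using h1, by simpa using h0⟩
    · intro h
      have h' : (l0 x, l1 x) = ((0 : ℝ), (0 : ℝ)) := h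
      rw [Prod.mk.injEq, hl0 x, hl1 x] at h'
      funext v
      rw [A_mulVec hm]
      split_ifs with hv
      · simpa using h'.2
      · simpa using h'.1
  rw [hker]
  have hsurj : Function.Surjective (l0.prod l1) := by
    intro p
    refine ⟨fun v => if v.val < m then p.1 / m else p.2 / m, ?_⟩
    have e0 : l0 (fun v : Fin (2 * m) => if v.val < m then p.1 / m else p.2 / m)
        = p.1 := by
      rw [hl0, Finset.sum_congr rfl
        (fun w hw => if_pos (Finset.mem_filter.mp hw).2),
        Finset.sum_const, card_filter_lt, nsmul_eq_mul]
      field_simp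
    have e1 : l1 (fun v : Fin (2 * m) => if v.val < m then p.1 / m else p.2 / m)
        = p.2 := by
      rw [hl1, Finset.sum_congr rfl
        (fun w hw => if_neg (by have := (Finset.mem_filter.mp hw).2; omega)),
        Finset.sum_const, card_filter_ge, nsmul_eq_mul]
      field_simp
    show (l0 _, l1 _) = p
    rw [Prod.mk.injEq]
    exact ⟨e0, e1⟩
  have hrn := LinearMap.finrank_range_add_finrank_ker (l0.prod l1)
  rw [LinearMap.range_eq_top.mpr hsurj, finrank_top] at hrn
  have h2 : Module.finrank ℝ (ℝ × ℝ) = 2 := by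
    rw [Module.finrank_prod, Module.finrank_self]
  have hdom : Module.finrank ℝ (Fin (2 * m) → ℝ) = 2 * m := by
    rw [Module.finrank_fintype_fun_eq_card, Fintype.card_fin]
  rw [h2, hdom] at hrn
  omega

lemma AAA_eq (hm : 1 ≤ m) :
    Amat m * Amat m * Amat m = ((m : ℝ) ^ 2) • Amat m := by
  rw [AA_eq hm, Matrix.smul_mul, PA_eq hm, smul_smul]
  congr 1
  ring

lemma eig_confine (hm : 1 ≤ m) (N : Matrix (OutT m) (OutT m) ℝ)
    (hNeq : N = BoutM m * (BoutM m)ᵀ) (μ : ℝ) (hμ : μ ≠ 0)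
    (h : Module.End.HasEigenvalue (Matrix.mulVecLin N) μ) :
    μ = 2 * (m : ℝ) ∨ μ = (m : ℝ) := by
  obtain ⟨v, hv⟩ := h.exists_hasEigenvector
  have hNv : N *ᵥ v = μ • v := by
    have := Module.End.mem_eigenspace_iff.mp hv.1
    rwa [Matrix.mulVecLin_apply] at this
  set y := (BoutM m)ᵀ *ᵥ v with hy
  have hBy : BoutM m *ᵥ y = μ • v := by
    rw [hy, Matrix.mulVec_mulVec, ← hNeq, hNv]
  have hy0 : y ≠ 0 := by
    intro h0
    rw [h0, Matrix.mulVec_zero] at hBy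
    rcases smul_eq_zero.mp hBy.symm with h5 | h5
    · exact hμ h5
    · exact hv.2 h5
  have hCy : ((m : ℝ) • (1 : Matrix (Fin (2 * m)) (Fin (2 * m)) ℝ) - Amat m) *ᵥ y
      = μ • y := by
    rw [← Cout_eq hm, ← Matrix.mulVec_mulVec, hBy, Matrix.mulVec_smul]
  have hAy : Amat m *ᵥ y = ((m : ℝ) - μ) • y := by
    rw [Matrix.sub_mulVec, Matrix.smul_mulVec, Matrix.one_mulVec] at hCy
    have h2 := sub_eq_iff_eq_add.mp hCy
    rw [sub_smul, h2]
    abel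
  have h2 : Amat m *ᵥ (Amat m *ᵥ y) = (((m : ℝ) - μ) ^ 2) • y := by
    rw [hAy, Matrix.mulVec_smul, hAy, smul_smul]
    congr 1
    ring
  have h3 : Amat m *ᵥ (Amat m *ᵥ (Amat m *ᵥ y)) = (((m : ℝ) - μ) ^ 3) • y := by
    rw [hAy, Matrix.mulVec_smul, Matrix.mulVec_smul, h2, smul_smul]
    congr 1
    ring
  have h4 : Amat m *ᵥ (Amat m *ᵥ (Amat m *ᵥ y)) = ((m : ℝ) ^ 2 * ((m : ℝ) - μ)) • y := by
    rw [Matrix.mulVec_mulVec, Matrix.mulVec_mulVec, AAA_eq hm,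
      Matrix.smul_mulVec, hAy, smul_smul]
  have h5 : ((((m : ℝ) - μ) ^ 3) - (m : ℝ) ^ 2 * ((m : ℝ) - μ)) • y = 0 := by
    rw [sub_smul, ← h3, h4, sub_self]
  have h6 : (((m : ℝ) - μ) ^ 3) - (m : ℝ) ^ 2 * ((m : ℝ) - μ) = 0 := by
    rcases smul_eq_zero.mp h5 with h7 | h7
    · exact h7
    · exact absurd h7 hy0
  have hf : ((m : ℝ) - μ) * ((((m : ℝ) - μ) - m) * (((m : ℝ) - μ) + m)) = 0 := by
    linear_combination h6
  rcases mul_eq_zero.mp hf with h7 | h7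
  · right; linarith
  · rcases mul_eq_zero.mp h7 with h8 | h8
    · exact absurd (by linarith : μ = 0) hμ
    · left; linarith

end Spectral
/-- For the complete bipartite 2-complex `K²_{m,m}`, write the
up-Laplacian `L↑_1` in blocks according to the partition of the edges into inner edges
`X₁^in` and crossing edges `X₁^out`, as `[[m·I, −M],[−Mᵀ, 2m·I − N]]`. Then the inner
block is indeed `m·I`, `MᵀM = m·N − 2·J`, and `N` has exactly two nonzero eigenvalues:
`2m` with multiplicity `1` (with the all-ones vector as eigenvector) and `m` with
multiplicity `2(m−1)`. -/
theorem bipartite_up_laplacian_blocks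
    (m : ℕ) (hm : 1 ≤ m)
    (M : Matrix {F : KSet (Fin (2 * m)) 2 // ∀ v ∈ F.1, ∀ w ∈ F.1, v.val / m = w.val / m}
                {F : KSet (Fin (2 * m)) 2 // ¬ ∀ v ∈ F.1, ∀ w ∈ F.1, v.val / m = w.val / m} ℝ)
    (hM : ∀ F G, M F G = -(LupE (bipartite2 m) 2 F.1 G.1))
    (N : Matrix {F : KSet (Fin (2 * m)) 2 // ¬ ∀ v ∈ F.1, ∀ w ∈ F.1, v.val / m = w.val / m}
                {F : KSet (Fin (2 * m)) 2 // ¬ ∀ v ∈ F.1, ∀ w ∈ F.1, v.val / m = w.val / m} ℝ)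
    (hN : ∀ F G, N F G =
      (if F = G then 2 * (m : ℝ) else 0) - LupE (bipartite2 m) 2 F.1 G.1) :
    (∀ F F' : {F : KSet (Fin (2 * m)) 2 // ∀ v ∈ F.1, ∀ w ∈ F.1, v.val / m = w.val / m},
      LupE (bipartite2 m) 2 F.1 F'.1 = if F = F' then (m : ℝ) else 0) ∧
    Mᵀ * M = (m : ℝ) • N - (2 : ℝ) • Matrix.of (fun _ _ => (1 : ℝ)) ∧
    N.mulVec (fun _ => 1) = (fun _ => 2 * (m : ℝ)) ∧
    Module.finrank ℝ
      (Module.End.eigenspace (Matrix.mulVecLin N) (2 * (m : ℝ))) = 1 ∧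
    Module.finrank ℝ
      (Module.End.eigenspace (Matrix.mulVecLin N) ((m : ℝ))) = 2 * (m - 1) ∧
    (∀ μ : ℝ, μ ≠ 0 → Module.End.HasEigenvalue (Matrix.mulVecLin N) μ →
      μ = 2 * (m : ℝ) ∨ μ = (m : ℝ)) := by
  have hNeq := N_eq_BBt hm N hN
  have hm1 : (1 : ℝ) ≤ (m : ℝ) := by exact_mod_cast hm
  refine ⟨fun F F' => LupE_inner_block hm F F', ?_, N_mulVec_one hm N hN, ?_, ?_, ?_⟩
  · rw [M_eq_BBt hm M hM, hNeq]
    calc (BinM m * (BoutM m)ᵀ)ᵀ * (BinM m * (BoutM m)ᵀ)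
        = BoutM m * ((BinM m)ᵀ * BinM m) * (BoutM m)ᵀ := by
          rw [Matrix.transpose_mul, Matrix.transpose_transpose, Matrix.mul_assoc,
            ← Matrix.mul_assoc (BinM m)ᵀ, ← Matrix.mul_assoc]
      _ = BoutM m * ((m : ℝ) • (1 : Matrix (Fin (2 * m)) (Fin (2 * m)) ℝ) - Pmat m) *
            (BoutM m)ᵀ := by rw [Cin_eq hm]
      _ = (m : ℝ) • (BoutM m * (BoutM m)ᵀ) -
            (2 : ℝ) • Matrix.of (fun _ _ : OutT m => (1 : ℝ)) := by
          rw [Matrix.mul_sub, Matrix.sub_mul, Matrix.mul_smul, Matrix.mul_one,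
            Matrix.smul_mul, BPB_eq hm]
          congr 1
          ext G G'
          simp
  · rw [hNeq, eigen_transfer (BoutM m) (2 * (m : ℝ)) (ne_of_gt (by linarith)),
      Cout_eq hm]
    exact eig2m_finrank hm
  · rw [hNeq, eigen_transfer (BoutM m) ((m : ℝ)) (ne_of_gt (by linarith)),
      Cout_eq hm]
    exact eigm_finrank hm
  · intro μ hμ0 hev
    exact eig_confine hm N hNeq μ hμ0 hev
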